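/- arXiv:2401.00638 — 3 statements merged into one kernel-verified Lean document; each statement's English description precedes it below -/
import Mathlib

section
/- Write ζG = ⟨z_1⟩ × ⟨z_2⟩ × ⋯ × ⟨z_r⟩ ≅ ℤ_{p^{n_1}} × ℤ_{p^{n_2}} × ⋯ × ℤ_{p^{n_r}} with n_1 ≥ n_2 ≥ ⋯ ≥ n_r ≥ 1. Then n ≤ n_1 ≤ n+1 and m ≤ n_2 ≤ m+1 (and n_i = 1 for 3 ≤ i ≤ r). -/
open scoped commutatorElement

private lemma aux_card_le {H : Type*} [Group H] [Finite H] [IsCyclic H] {p : ℕ} (hp : 0 < p) :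
    Nat.card {a : H // a ^ p = 1} ≤ p := by
  classical
  cases nonempty_fintype H
  have := IsCyclic.card_pow_eq_one_le (α := H) hp
  rw [Nat.card_eq_fintype_card, Fintype.card_subtype]
  exact this

private lemma aux_cyclic {H : Type*} [Group H] [Finite H] [IsCyclic H] {p : ℕ} (hp : p.Prime)
    {x y : H} (hx : orderOf x = p) (hy : y ^ p = 1) : ∃ t : ℕ, y = x ^ t := by
  classical
  have hxp : x ^ p = 1 := hx ▸ pow_orderOf_eq_one x
  let f : Fin p → {a : H // a ^ p = 1} := fun i =>
    ⟨x ^ (i : ℕ), by rw [← pow_mul, mul_comm, pow_mul, hxp, one_pow]⟩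
  have hinj : Function.Injective f := by
    intro i j hij
    have h1 : x ^ (i : ℕ) = x ^ (j : ℕ) := congrArg Subtype.val hij
    exact Fin.ext (pow_injOn_Iio_orderOf (by rw [hx]; exact i.isLt)
      (by rw [hx]; exact j.isLt) h1)
  have hcard : Nat.card (Fin p) = Nat.card {a : H // a ^ p = 1} := by
    refine le_antisymm (Nat.card_le_card_of_injective f hinj) ?_
    calc Nat.card {a : H // a ^ p = 1} ≤ p := aux_card_le hp.pos
    _ = Nat.card (Fin p) := by simp
  obtain ⟨i, hi⟩ := ((Nat.bijective_iff_injective_and_card f).mpr ⟨hinj, hcard⟩).2 ⟨y, hy⟩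
  exact ⟨i, (congrArg Subtype.val hi).symm⟩

private lemma aux_rank2 {H : Type*} [CommGroup H] [Finite H] {p : ℕ} (hp : p.Prime)
    (hcard : Nat.card {a : H // a ^ p = 1} ≤ p * p)
    {x y w : H} (hx : orderOf x = p) (hy : orderOf y = p) (hw : w ^ p = 1)
    (hdisj : ∀ a b : ℕ, x ^ a = y ^ b → x ^ a = 1) :
    ∃ s t : ℕ, w = x ^ s * y ^ t := by
  classical
  have hxp : x ^ p = 1 := hx ▸ pow_orderOf_eq_one x
  have hyp : y ^ p = 1 := hy ▸ pow_orderOf_eq_one y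
  let f : Fin p × Fin p → {a : H // a ^ p = 1} := fun ij =>
    ⟨x ^ (ij.1 : ℕ) * y ^ (ij.2 : ℕ), by
      rw [mul_pow, ← pow_mul, mul_comm (ij.1 : ℕ) p, pow_mul, hxp, one_pow,
        ← pow_mul, mul_comm (ij.2 : ℕ) p, pow_mul, hyp, one_pow, one_mul]⟩
  have key : ∀ i j k l : ℕ, i < p → j < p → k < p → l < p →
      x ^ i * y ^ j = x ^ k * y ^ l → i = k := by
    intro i j k l hi hj hk hl hijkl
    have h2' : j + (p - j) = p := by omega
    have h3 : k + (p - k) = p := by omega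
    have e : x ^ (i + (p - k)) = y ^ (l + (p - j)) := by
      calc x ^ (i + (p - k)) = x ^ (i + (p - k)) * y ^ (j + (p - j)) := by
            rw [h2', hyp, mul_one]
        _ = (x ^ i * y ^ j) * (x ^ (p - k) * y ^ (p - j)) := by
            rw [mul_mul_mul_comm, ← pow_add, ← pow_add]
        _ = (x ^ k * y ^ l) * (x ^ (p - k) * y ^ (p - j)) := by rw [hijkl]
        _ = x ^ (k + (p - k)) * y ^ (l + (p - j)) := by
            rw [mul_mul_mul_comm, ← pow_add, ← pow_add]
        _ = y ^ (l + (p - j)) := by rw [h3, hxp, one_mul]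
    have e1 : x ^ (i + (p - k)) = 1 := hdisj _ _ e
    have e2 := orderOf_dvd_of_pow_eq_one e1
    rw [hx] at e2
    obtain ⟨q, hq⟩ := e2
    have hlt : i + (p - k) < 2 * p := by omega
    rw [hq] at hlt
    have hq2 : p * q < p * 2 := by omega
    have hq3 : q < 2 := Nat.lt_of_mul_lt_mul_left hq2
    have hq4 : q ≠ 0 := by
      rintro rfl
      rw [Nat.mul_zero] at hq
      omega
    have hq5 : q = 1 := by omega
    rw [hq5, Nat.mul_one] at hq
    omega
  have hinj : Function.Injective f := by
    rintro ⟨i, j⟩ ⟨k, l⟩ hij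
    have h1 : x ^ (i : ℕ) * y ^ (j : ℕ) = x ^ (k : ℕ) * y ^ (l : ℕ) :=
      congrArg Subtype.val hij
    have hik : (i : ℕ) = (k : ℕ) := key _ _ _ _ i.isLt j.isLt k.isLt l.isLt h1
    have hjl : y ^ (j : ℕ) = y ^ (l : ℕ) := by
      rw [hik] at h1; exact mul_left_cancel h1
    have : (j : ℕ) = (l : ℕ) := pow_injOn_Iio_orderOf (by rw [hy]; exact j.isLt)
      (by rw [hy]; exact l.isLt) hjl
    exact Prod.ext (Fin.ext hik) (Fin.ext this)
  have hcard' : Nat.card (Fin p × Fin p) = Nat.card {a : H // a ^ p = 1} := by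
    refine le_antisymm (Nat.card_le_card_of_injective f hinj) ?_
    calc Nat.card {a : H // a ^ p = 1} ≤ p * p := hcard
    _ = Nat.card (Fin p × Fin p) := by simp [Nat.card_prod]
  obtain ⟨⟨i, j⟩, hij⟩ := ((Nat.bijective_iff_injective_and_card f).mpr ⟨hinj, hcard'⟩).2 ⟨w, hw⟩
  exact ⟨i, j, (congrArg Subtype.val hij).symm⟩

private lemma aux_ord_pow {G : Type*} [Group G] [Finite G] {w : G} {p a b : ℕ} (hp : p.Prime)
    (h : orderOf w = p ^ a) (hba : b ≤ a) : orderOf (w ^ p ^ b) = p ^ (a - b) := by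
  rw [orderOf_pow, h, Nat.gcd_eq_right (pow_dvd_pow p hba), Nat.pow_div hba hp.pos]

private lemma prod_pow_mk {M N : Type*} [Monoid M] [Monoid N] (a : M) (b : N) (k : ℕ) :
    (a, b) ^ k = (a ^ k, b ^ k) := rfl

/-- if `ζG = ⟨z_1⟩ × ⋯ × ⟨z_r⟩ ≅ ℤ_{p^{n_1}} × ⋯ × ℤ_{p^{n_r}}`
with `n_1 ≥ n_2 ≥ ⋯ ≥ n_r ≥ 1`, then `n ≤ n_1 ≤ n+1`, `m ≤ n_2 ≤ m+1`, and
`n_i = 1` for `3 ≤ i ≤ r`. -/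
theorem stmt_2 {p n m r : ℕ} [Fact p.Prime] (hp : Odd p) (hm : 1 ≤ m) (hmn : m ≤ n)
    {G : Type*} [Group G] [Finite G] (hpG : IsPGroup p G)
    (N : Subgroup G) (hNZ : N ≤ Subgroup.center G)
    (hNiso : Nonempty (↥N ≃* Multiplicative (ZMod (p ^ n)) × Multiplicative (ZMod (p ^ m))))
    (hpow : ∀ x : G, x ^ p ∈ N) (hcomm : ∀ x y : G, ⁅x, y⁆ ∈ N)
    (c : G) (hc : commutator G = Subgroup.zpowers c) (hcp : orderOf c = p)
    (hr : 2 ≤ r) (z : Fin r → G) (e : Fin r → ℕ)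
    (hord : ∀ i, orderOf (z i) = p ^ (e i))
    (hmono : ∀ i j : Fin r, i ≤ j → e j ≤ e i)
    (hpos : ∀ i, 1 ≤ e i)
    (hind : iSupIndep fun i => Subgroup.zpowers (z i))
    (hjoin : (⨆ i, Subgroup.zpowers (z i)) = Subgroup.center G) :
    n ≤ e ⟨0, by omega⟩ ∧ e ⟨0, by omega⟩ ≤ n + 1 ∧
    m ≤ e ⟨1, by omega⟩ ∧ e ⟨1, by omega⟩ ≤ m + 1 ∧
    ∀ i : Fin r, 2 ≤ (i : ℕ) → e i = 1 := by
  classical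
  have pp : p.Prime := Fact.out
  haveI : NeZero (p ^ n) := ⟨pow_ne_zero _ pp.ne_zero⟩
  haveI : NeZero (p ^ m) := ⟨pow_ne_zero _ pp.ne_zero⟩
  obtain ⟨θ⟩ := hNiso
  set i0 : Fin r := ⟨0, by omega⟩ with hi0def
  set i1 : Fin r := ⟨1, by omega⟩ with hi1def
  have hi0le : ∀ i : Fin r, i0 ≤ i := by
    intro i; rw [Fin.le_def]; exact Nat.zero_le _
  have hi1le : ∀ i : Fin r, i ≠ i0 → i1 ≤ i := by
    intro i hi
    have hne : (i : ℕ) ≠ 0 := fun h => hi (Fin.ext h)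
    rw [Fin.le_def]
    show 1 ≤ (i : ℕ)
    omega
  have hi01 : i0 ≠ i1 := Fin.ne_of_val_ne Nat.zero_ne_one
  -- the key power-decomposition lemma
  have key : ∀ (k : ℕ) (g : G), g ∈ Subgroup.center G →
      g ^ p ^ k ∈ ⨆ i, Subgroup.zpowers (z i ^ p ^ k) := by
    intro k g hg
    rw [← hjoin] at hg
    refine Subgroup.iSup_induction'
      (C := fun x _ => x ^ p ^ k ∈ ⨆ i, Subgroup.zpowers (z i ^ p ^ k)) _ ?_ ?_ ?_ hg
    · intro i w hw
      obtain ⟨t, rfl⟩ := Subgroup.mem_zpowers_iff.mp hw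
      have hcz : (z i ^ t) ^ p ^ k = (z i ^ p ^ k) ^ t := by
        rw [← zpow_natCast (z i ^ t) (p ^ k), ← zpow_mul, mul_comm, zpow_mul, zpow_natCast]
      rw [hcz]
      exact Subgroup.mem_iSup_of_mem i (Subgroup.zpow_mem _ (Subgroup.mem_zpowers _) t)
    · show (1 : G) ^ p ^ k ∈ _
      rw [one_pow]; exact Subgroup.one_mem _
    · intro a b ha hb Ca Cb
      have ha' : a ∈ Subgroup.center G := by rw [hjoin] at ha; exact ha
      have hcab : Commute a b := ((Subgroup.mem_center_iff.mp ha') b).symm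
      rw [hcab.mul_pow]
      exact Subgroup.mul_mem _ Ca Cb
  -- generators of the two cyclic factors
  have hcardM1 : Nat.card (Multiplicative (ZMod (p ^ n))) = p ^ n := by
    rw [Nat.card_congr Multiplicative.toAdd, Nat.card_zmod]
  have hcardM2 : Nat.card (Multiplicative (ZMod (p ^ m))) = p ^ m := by
    rw [Nat.card_congr Multiplicative.toAdd, Nat.card_zmod]
  set g1 : Multiplicative (ZMod (p ^ n)) := Multiplicative.ofAdd 1 with hg1def
  set g2 : Multiplicative (ZMod (p ^ m)) := Multiplicative.ofAdd 1 with hg2def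
  have hg1 : orderOf g1 = p ^ n := by
    rw [hg1def, orderOf_ofAdd_eq_addOrderOf, ZMod.addOrderOf_one]
  have hg2 : orderOf g2 = p ^ m := by
    rw [hg2def, orderOf_ofAdd_eq_addOrderOf, ZMod.addOrderOf_one]
  set xN : ↥N := θ.symm (g1, 1) with hxNdef
  set yN : ↥N := θ.symm (1, g2) with hyNdef
  have hθx : θ xN = (g1, 1) := θ.apply_symm_apply _
  have hθy : θ yN = (1, g2) := θ.apply_symm_apply _
  have hxNord : orderOf xN = p ^ n := by
    rw [← orderOf_injective θ.toMonoidHom θ.injective xN]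
    show orderOf (θ xN) = p ^ n
    rw [hθx, Prod.orderOf_mk, orderOf_one, Nat.lcm_one_right, hg1]
  have hyNord : orderOf yN = p ^ m := by
    rw [← orderOf_injective θ.toMonoidHom θ.injective yN]
    show orderOf (θ yN) = p ^ m
    rw [hθy, Prod.orderOf_mk, orderOf_one, Nat.lcm_one_left, hg2]
  have hX : orderOf ((xN : G)) = p ^ n := by
    rw [← hxNord]; exact (Subgroup.orderOf_mk _ xN.2).symm
  have hY : orderOf ((yN : G)) = p ^ m := by
    rw [← hyNord]; exact (Subgroup.orderOf_mk _ yN.2).symm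
  -- every element of N is killed by p ^ n
  have hM2exp : ∀ v : Multiplicative (ZMod (p ^ m)), v ^ p ^ m = 1 := by
    intro v
    have h := pow_card_eq_one' (x := v)
    rwa [hcardM2] at h
  have hNexp : ∀ a : ↥N, a ^ p ^ n = 1 := by
    intro a
    apply θ.injective
    rw [map_pow, map_one]
    have hc1 : (θ a).1 ^ p ^ n = 1 := by
      have h := pow_card_eq_one' (x := (θ a).1)
      rwa [hcardM1] at h
    have hc2 : (θ a).2 ^ p ^ n = 1 := by
      have : (θ a).2 ^ p ^ m = 1 := hM2exp _
      calc (θ a).2 ^ p ^ n = ((θ a).2 ^ p ^ m) ^ p ^ (n - m) := by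
            rw [← pow_mul, ← pow_add, show m + (n - m) = n from by omega]
        _ = 1 := by rw [this, one_pow]
    exact Prod.ext hc1 hc2
  -- orderOf (z i ^ p ^ (e i - 1)) = p
  have hWord : ∀ i : Fin r, orderOf (z i ^ p ^ (e i - 1)) = p := by
    intro i
    have h := aux_ord_pow pp (hord i) (show e i - 1 ≤ e i by omega)
    rw [h, show e i - (e i - 1) = 1 from by have := hpos i; omega, pow_one]
  -- Part 1 : n ≤ e i0
  have part1 : n ≤ e i0 := by
    have hbot : (⨆ i, Subgroup.zpowers (z i ^ p ^ e i0)) = ⊥ := by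
      refine le_bot_iff.mp (iSup_le fun i => ?_)
      have hdvd : orderOf (z i) ∣ p ^ e i0 := by
        rw [hord i]; exact pow_dvd_pow p (hmono i0 i (hi0le i))
      rw [orderOf_dvd_iff_pow_eq_one.mp hdvd, Subgroup.zpowers_one_eq_bot]
    have hX1 : (xN : G) ^ p ^ e i0 = 1 := by
      have h := key (e i0) (xN : G) (hNZ xN.2)
      rw [hbot] at h
      exact Subgroup.mem_bot.mp h
    have h := orderOf_dvd_of_pow_eq_one hX1
    rw [hX] at h
    exact (Nat.pow_dvd_pow_iff_le_right pp.one_lt).mp h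
  -- Part 2 : e i0 ≤ n + 1
  have part2 : e i0 ≤ n + 1 := by
    have hzo : orderOf (z i0 ^ p) = p ^ (e i0 - 1) := by
      have h := aux_ord_pow pp (hord i0) (show 1 ≤ e i0 from hpos i0)
      rw [pow_one] at h
      exact h
    have hzN : orderOf ((⟨z i0 ^ p, hpow (z i0)⟩ : ↥N)) = p ^ (e i0 - 1) := by
      rw [Subgroup.orderOf_mk]; exact hzo
    have h := orderOf_dvd_of_pow_eq_one (hNexp ⟨z i0 ^ p, hpow (z i0)⟩)
    rw [hzN] at h
    have := (Nat.pow_dvd_pow_iff_le_right pp.one_lt).mp h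
    omega
  -- Part 3 : m ≤ e i1
  have part3 : m ≤ e i1 := by
    by_contra hcon
    push_neg at hcon
    have hsub : ∀ g : G, g ∈ Subgroup.center G →
        g ^ p ^ e i1 ∈ Subgroup.zpowers (z i0) := by
      intro g hg
      have hle : (⨆ i, Subgroup.zpowers (z i ^ p ^ e i1)) ≤ Subgroup.zpowers (z i0) := by
        refine iSup_le fun i => ?_
        by_cases hi : i = i0
        · subst hi
          exact Subgroup.zpowers_le.mpr (Subgroup.pow_mem _ (Subgroup.mem_zpowers _) _)
        · have hile : e i ≤ e i1 := hmono i1 i (hi1le i hi)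
          have hz1 : z i ^ p ^ e i1 = 1 :=
            orderOf_dvd_iff_pow_eq_one.mp (by rw [hord i]; exact pow_dvd_pow p hile)
          rw [hz1, Subgroup.zpowers_one_eq_bot]
          exact bot_le
      exact hle (key _ g hg)
    have hkm : e i1 ≤ m - 1 := by omega
    have hkn : e i1 ≤ n - 1 := by omega
    have hU : (xN : G) ^ p ^ (n - 1) ∈ Subgroup.zpowers (z i0) := by
      have h := hsub (xN : G) (hNZ xN.2)
      have heq : ((xN : G) ^ p ^ e i1) ^ p ^ (n - 1 - e i1) = (xN : G) ^ p ^ (n - 1) := by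
        rw [← pow_mul, ← pow_add, show e i1 + (n - 1 - e i1) = n - 1 from by omega]
      rw [← heq]
      exact Subgroup.pow_mem _ h _
    have hV : (yN : G) ^ p ^ (m - 1) ∈ Subgroup.zpowers (z i0) := by
      have h := hsub (yN : G) (hNZ yN.2)
      have heq : ((yN : G) ^ p ^ e i1) ^ p ^ (m - 1 - e i1) = (yN : G) ^ p ^ (m - 1) := by
        rw [← pow_mul, ← pow_add, show e i1 + (m - 1 - e i1) = m - 1 from by omega]
      rw [← heq]
      exact Subgroup.pow_mem _ h _
    have hUord : orderOf ((xN : G) ^ p ^ (n - 1)) = p := by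
      have h := aux_ord_pow pp hX (show n - 1 ≤ n by omega)
      rw [h, show n - (n - 1) = 1 from by omega, pow_one]
    haveI hCyc : IsCyclic ↥(Subgroup.zpowers (z i0)) := by
      refine ⟨⟨⟨z i0, Subgroup.mem_zpowers _⟩, fun w => ?_⟩⟩
      obtain ⟨t, ht⟩ := Subgroup.mem_zpowers_iff.mp w.2
      exact Subgroup.mem_zpowers_iff.mpr
        ⟨t, Subtype.ext (by rw [SubgroupClass.coe_zpow]; exact ht)⟩
    set u : ↥(Subgroup.zpowers (z i0)) := ⟨(xN : G) ^ p ^ (n - 1), hU⟩ with hudef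
    set v : ↥(Subgroup.zpowers (z i0)) := ⟨(yN : G) ^ p ^ (m - 1), hV⟩ with hvdef
    have hu : orderOf u = p := by rw [hudef, Subgroup.orderOf_mk]; exact hUord
    have hv : v ^ p = 1 := by
      apply Subtype.ext
      rw [SubgroupClass.coe_pow]
      show ((yN : G) ^ p ^ (m - 1)) ^ p = 1
      rw [← pow_mul, ← pow_succ, show m - 1 + 1 = m from by omega, ← hY]
      exact pow_orderOf_eq_one _
    obtain ⟨t, ht⟩ := aux_cyclic pp hu hv
    have hG1 : (yN : G) ^ p ^ (m - 1) = ((xN : G) ^ p ^ (n - 1)) ^ t := by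
      have h := congrArg Subtype.val ht
      rwa [SubgroupClass.coe_pow] at h
    have hN1 : yN ^ p ^ (m - 1) = (xN ^ p ^ (n - 1)) ^ t := by
      apply Subtype.ext
      rw [SubgroupClass.coe_pow, SubgroupClass.coe_pow, SubgroupClass.coe_pow]
      exact hG1
    have hA1 := congrArg θ hN1
    rw [map_pow, map_pow, map_pow, hθx, hθy] at hA1
    simp only [prod_pow_mk, one_pow] at hA1
    have hg2' : g2 ^ p ^ (m - 1) = 1 := congrArg Prod.snd hA1
    have h := orderOf_dvd_of_pow_eq_one hg2'
    rw [hg2] at h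
    have := (Nat.pow_dvd_pow_iff_le_right pp.one_lt).mp h
    omega
  -- builder for part 4
  have build : ∀ i : Fin r, m + 2 ≤ e i →
      ∃ ν : ↥N, (ν : G) = z i ^ p ^ (e i - 1) ∧ (θ ν).2 = 1 := by
    intro i hi
    refine ⟨(⟨(z i ^ p ^ (e i - m - 2)) ^ p, hpow _⟩ : ↥N) ^ p ^ m, ?_, ?_⟩
    · rw [SubgroupClass.coe_pow]
      show ((z i ^ p ^ (e i - m - 2)) ^ p) ^ p ^ m = _
      rw [← pow_mul, ← pow_mul]
      congr 1
      rw [← pow_succ', ← pow_add]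
      congr 1
      omega
    · rw [map_pow]
      show (θ _).2 ^ p ^ m = 1
      exact hM2exp _
  -- Part 4 : e i1 ≤ m + 1
  have part4 : e i1 ≤ m + 1 := by
    by_contra hcon
    push_neg at hcon
    have hcon1 : m + 2 ≤ e i1 := by omega
    have hcon0 : m + 2 ≤ e i0 := le_trans hcon1 (hmono i0 i1 (hi0le i1))
    obtain ⟨ν0, hν0c, hν0s⟩ := build i0 hcon0
    obtain ⟨ν1, hν1c, hν1s⟩ := build i1 hcon1
    have hν0ord : orderOf ν0 = p := by
      rw [show ν0 = ⟨(ν0 : G), ν0.2⟩ from rfl, Subgroup.orderOf_mk, hν0c]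
      exact hWord i0
    have hν1ord : orderOf ν1 = p := by
      rw [show ν1 = ⟨(ν1 : G), ν1.2⟩ from rfl, Subgroup.orderOf_mk, hν1c]
      exact hWord i1
    have hθν0 : θ ν0 = ((θ ν0).1, 1) := Prod.ext rfl hν0s
    have hθν1 : θ ν1 = ((θ ν1).1, 1) := Prod.ext rfl hν1s
    have hu0 : orderOf (θ ν0).1 = p := by
      have h := orderOf_injective θ.toMonoidHom θ.injective ν0
      rw [hν0ord] at h
      rw [show (θ.toMonoidHom ν0 : _) = θ ν0 from rfl, hθν0, Prod.orderOf_mk,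
        orderOf_one, Nat.lcm_one_right] at h
      exact h
    have hu1 : (θ ν1).1 ^ p = 1 := by
      have h : θ ν1 ^ p = 1 := by
        rw [← map_pow, ← map_one θ]
        congr 1
        rw [← hν1ord]
        exact pow_orderOf_eq_one _
      have := congrArg Prod.fst h
      exact this
    obtain ⟨t, ht⟩ := aux_cyclic pp hu0 hu1
    have hνeq : ν1 = ν0 ^ t := by
      apply θ.injective
      rw [map_pow]
      calc θ ν1 = ((θ ν1).1, 1) := hθν1
        _ = ((θ ν0).1 ^ t, 1) := by rw [ht]
        _ = ((θ ν0).1, 1) ^ t := by rw [prod_pow_mk, one_pow]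
        _ = (θ ν0) ^ t := by rw [← hθν0]
    have hW1mem0 : z i1 ^ p ^ (e i1 - 1) ∈ Subgroup.zpowers (z i0) := by
      have h := congrArg (Subtype.val : ↥N → G) hνeq
      rw [SubgroupClass.coe_pow, hν0c, hν1c] at h
      rw [h]
      exact Subgroup.pow_mem _ (Subgroup.pow_mem _ (Subgroup.mem_zpowers _) _) _
    have hW1mem : z i1 ^ p ^ (e i1 - 1) ∈ ⨆ j, ⨆ _ : j ≠ i1, Subgroup.zpowers (z j) :=
      Subgroup.mem_iSup_of_mem i0 (Subgroup.mem_iSup_of_mem hi01 hW1mem0)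
    have hW1self : z i1 ^ p ^ (e i1 - 1) ∈ Subgroup.zpowers (z i1) :=
      Subgroup.pow_mem _ (Subgroup.mem_zpowers _) _
    have h1 : z i1 ^ p ^ (e i1 - 1) = 1 :=
      Subgroup.disjoint_def.mp (hind i1) hW1self hW1mem
    have h2 := hWord i1
    rw [h1, orderOf_one] at h2
    exact pp.ne_one h2.symm
  -- Part 5 : e i = 1 for i ≥ 2
  have part5 : ∀ i : Fin r, 2 ≤ (i : ℕ) → e i = 1 := by
    intro i hi2
    by_contra hne
    have hei : 2 ≤ e i := by have := hpos i; omega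
    have hii0 : i0 ≠ i := Fin.ne_of_val_ne (by show 0 ≠ (i : ℕ); omega)
    have hii1 : i1 ≠ i := Fin.ne_of_val_ne (by show 1 ≠ (i : ℕ); omega)
    have hei1 : 2 ≤ e i1 := le_trans hei (hmono i1 i (hi1le i (Ne.symm hii0)))
    have hei0 : 2 ≤ e i0 := le_trans hei1 (hmono i0 i1 (hi0le i1))
    have hWN : ∀ j : Fin r, 2 ≤ e j → z j ^ p ^ (e j - 1) ∈ N := by
      intro j hj
      have h : z j ^ p ^ (e j - 1) = (z j ^ p ^ (e j - 2)) ^ p := by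
        rw [← pow_mul, ← pow_succ, show e j - 2 + 1 = e j - 1 from by omega]
      rw [h]
      exact hpow _
    set w0N : ↥N := ⟨z i0 ^ p ^ (e i0 - 1), hWN i0 hei0⟩ with hw0def
    set w1N : ↥N := ⟨z i1 ^ p ^ (e i1 - 1), hWN i1 hei1⟩ with hw1def
    set wiN : ↥N := ⟨z i ^ p ^ (e i - 1), hWN i hei⟩ with hwidef
    have hω0 : orderOf (θ w0N) = p := by
      have h := orderOf_injective θ.toMonoidHom θ.injective w0N
      rw [show θ.toMonoidHom w0N = θ w0N from rfl] at h
      rw [h]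
      exact (Subgroup.orderOf_mk _ (hWN i0 hei0)).trans (hWord i0)
    have hω1 : orderOf (θ w1N) = p := by
      have h := orderOf_injective θ.toMonoidHom θ.injective w1N
      rw [show θ.toMonoidHom w1N = θ w1N from rfl] at h
      rw [h]
      exact (Subgroup.orderOf_mk _ (hWN i1 hei1)).trans (hWord i1)
    have hωi : (θ wiN) ^ p = 1 := by
      rw [← map_pow, ← map_one θ]
      congr 1
      apply Subtype.ext
      rw [SubgroupClass.coe_pow]
      show (z i ^ p ^ (e i - 1)) ^ p = 1
      rw [← orderOf_dvd_iff_pow_eq_one, hWord i]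
    have hcardA : Nat.card {a : Multiplicative (ZMod (p ^ n)) × Multiplicative (ZMod (p ^ m)) //
        a ^ p = 1} ≤ p * p := by
      have hinj : Function.Injective
          (fun a : {a : Multiplicative (ZMod (p ^ n)) × Multiplicative (ZMod (p ^ m)) // a ^ p = 1} =>
            ((⟨a.1.1, congrArg Prod.fst a.2⟩ : {u : Multiplicative (ZMod (p ^ n)) // u ^ p = 1}),
             (⟨a.1.2, congrArg Prod.snd a.2⟩ : {v : Multiplicative (ZMod (p ^ m)) // v ^ p = 1}))) := by
        rintro ⟨⟨a1, a2⟩, ha⟩ ⟨⟨b1, b2⟩, hb⟩ h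
        simp only [Prod.mk.injEq, Subtype.mk.injEq] at h
        exact Subtype.ext (Prod.ext h.1 h.2)
      calc Nat.card {a : Multiplicative (ZMod (p ^ n)) × Multiplicative (ZMod (p ^ m)) // a ^ p = 1}
          ≤ Nat.card ({u : Multiplicative (ZMod (p ^ n)) // u ^ p = 1} ×
            {v : Multiplicative (ZMod (p ^ m)) // v ^ p = 1}) :=
            Nat.card_le_card_of_injective _ hinj
        _ = Nat.card {u : Multiplicative (ZMod (p ^ n)) // u ^ p = 1} *
            Nat.card {v : Multiplicative (ZMod (p ^ m)) // v ^ p = 1} := Nat.card_prod _ _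
        _ ≤ p * p := Nat.mul_le_mul (aux_card_le pp.pos) (aux_card_le pp.pos)
    have hdisj : ∀ a b : ℕ, (θ w0N) ^ a = (θ w1N) ^ b → (θ w0N) ^ a = 1 := by
      intro a b hab
      rw [← map_pow, ← map_pow] at hab
      have hN' : w0N ^ a = w1N ^ b := θ.injective hab
      have hGeq : (z i0 ^ p ^ (e i0 - 1)) ^ a = (z i1 ^ p ^ (e i1 - 1)) ^ b := by
        have h := congrArg (Subtype.val : ↥N → G) hN'
        rwa [SubgroupClass.coe_pow, SubgroupClass.coe_pow] at h
      have hmem0 : (z i0 ^ p ^ (e i0 - 1)) ^ a ∈ Subgroup.zpowers (z i0) :=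
        Subgroup.pow_mem _ (Subgroup.pow_mem _ (Subgroup.mem_zpowers _) _) _
      have hmem1 : (z i0 ^ p ^ (e i0 - 1)) ^ a ∈
          ⨆ j, ⨆ _ : j ≠ i0, Subgroup.zpowers (z j) := by
        rw [hGeq]
        exact Subgroup.mem_iSup_of_mem i1 (Subgroup.mem_iSup_of_mem (Ne.symm hi01)
          (Subgroup.pow_mem _ (Subgroup.pow_mem _ (Subgroup.mem_zpowers _) _) _))
      have h1 : (z i0 ^ p ^ (e i0 - 1)) ^ a = 1 :=
        Subgroup.disjoint_def.mp (hind i0) hmem0 hmem1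
      rw [← map_pow]
      rw [show w0N ^ a = 1 from Subtype.ext (by rw [SubgroupClass.coe_pow]; exact h1), map_one]
    obtain ⟨s, t, hst⟩ := aux_rank2 pp hcardA hω0 hω1 hωi hdisj
    have hNeq : wiN = w0N ^ s * w1N ^ t := by
      apply θ.injective
      rw [map_mul, map_pow, map_pow]
      exact hst
    have hGeq : z i ^ p ^ (e i - 1) =
        (z i0 ^ p ^ (e i0 - 1)) ^ s * (z i1 ^ p ^ (e i1 - 1)) ^ t := by
      have h := congrArg (Subtype.val : ↥N → G) hNeq
      rwa [Subgroup.coe_mul, SubgroupClass.coe_pow, SubgroupClass.coe_pow] at h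
    have hmemi : z i ^ p ^ (e i - 1) ∈ ⨆ j, ⨆ _ : j ≠ i, Subgroup.zpowers (z j) := by
      rw [hGeq]
      refine Subgroup.mul_mem _ ?_ ?_
      · exact Subgroup.mem_iSup_of_mem i0 (Subgroup.mem_iSup_of_mem hii0
          (Subgroup.pow_mem _ (Subgroup.pow_mem _ (Subgroup.mem_zpowers _) _) _))
      · exact Subgroup.mem_iSup_of_mem i1 (Subgroup.mem_iSup_of_mem hii1
          (Subgroup.pow_mem _ (Subgroup.pow_mem _ (Subgroup.mem_zpowers _) _) _))
    have hmemself : z i ^ p ^ (e i - 1) ∈ Subgroup.zpowers (z i) :=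
      Subgroup.pow_mem _ (Subgroup.mem_zpowers _) _
    have h1 : z i ^ p ^ (e i - 1) = 1 :=
      Subgroup.disjoint_def.mp (hind i) hmemself hmemi
    have h2 := hWord i
    rw [h1, orderOf_one] at h2
    exact pp.ne_one h2.symm
  exact ⟨part1, part2, part3, part4, part5⟩
end

section
/- The order of the center of the normalized unit group is |ζ(V(𝔽_pG))| = p^{(|G| + (p−1)|ζG| − p)/p}. -/
noncomputable section

/-- The augmentation map `ε : 𝔽_pG → 𝔽_p` of the group algebra. -/
def aug (p : ℕ) (G : Type*) [Group G] :
    MonoidAlgebra (ZMod p) G →ₐ[ZMod p] ZMod p :=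
  MonoidAlgebra.lift (ZMod p) (ZMod p) G 1

/-- The group `V(𝔽_pG)` of normalized units, realized as the subgroup of the
unit group of the group algebra consisting of the units of augmentation `1`. -/
def normUnits (p : ℕ) (G : Type*) [Group G] :
    Subgroup (MonoidAlgebra (ZMod p) G)ˣ :=
  MonoidHom.ker (Units.map (aug p G).toRingHom.toMonoidHom)

/-- The image of `V(𝔽_pH)` inside the unit group of `𝔽_pG`, for a subgroup
`H ≤ G`. -/
def normUnitsOf (p : ℕ) {G : Type*} [Group G] (H : Subgroup G) :
    Subgroup (MonoidAlgebra (ZMod p) G)ˣ :=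
  Subgroup.map
    (Units.map (MonoidAlgebra.mapDomainRingHom (ZMod p) H.subtype).toMonoidHom)
    (normUnits p ↥H)

/-- `Ĉ_g`: the sum, in `𝔽_pG`, of the elements of the conjugacy class of `g`. -/
def classSum (p : ℕ) {G : Type*} [Group G] [Fintype G] (g : G) :
    MonoidAlgebra (ZMod p) G :=
  letI := Classical.decPred fun h : G => IsConj g h
  ∑ h ∈ Finset.univ.filter (fun h => IsConj g h), MonoidAlgebra.of (ZMod p) G h

/-- The subgroup `C` generated by the elements `1 + Ĉ_g`, for `g` ranging over
the noncentral elements of `G`. -/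
def Csub (p : ℕ) (G : Type*) [Group G] [Fintype G] :
    Subgroup (MonoidAlgebra (ZMod p) G)ˣ :=
  Subgroup.closure {u | ∃ g : G, g ∉ Subgroup.center G ∧
    (u : MonoidAlgebra (ZMod p) G) = 1 + classSum p g}

/-- The center of a subgroup `S`, realized as a subgroup of the ambient group. -/
def centerOf {W : Type*} [Group W] (S : Subgroup W) : Subgroup W :=
  Subgroup.centralizer (S : Set W) ⊓ S

/-- The subgroup `S^q` generated by the `q`-th powers of elements of `S`. -/
def powSub {W : Type*} [Group W] (S : Subgroup W) (q : ℕ) : Subgroup W :=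
  Subgroup.closure {x | ∃ v ∈ S, x = v ^ q}

/-- `Ω_l(S)`: the subgroup generated by the elements `x ∈ S` with `x^{p^l} = 1`. -/
def omegaSub {W : Type*} [Group W] (p l : ℕ) (S : Subgroup W) : Subgroup W :=
  Subgroup.closure {x | x ∈ S ∧ x ^ p ^ l = 1}

/-- The subgroup `G^q` of `G` generated by `q`-th powers. -/
def pthPowers (G : Type*) [Group G] (q : ℕ) : Subgroup G :=
  Subgroup.closure {x : G | ∃ g : G, x = g ^ q}

/-- `Ω(G, q)`: the subgroup of `G` generated by the elements `x` with `x^q = 1`. -/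
def omegaGrp (G : Type*) [Group G] (q : ℕ) : Subgroup G :=
  Subgroup.closure {x : G | x ^ q = 1}

/-- `Δ(G,H)`: the (left) ideal of `𝔽_pG` generated by `{h - 1 : h ∈ H}`. -/
def deltaIdeal (p : ℕ) (G : Type*) [Group G] (H : Subgroup G) :
    Ideal (MonoidAlgebra (ZMod p) G) :=
  Ideal.span {x | ∃ h ∈ H, x = MonoidAlgebra.of (ZMod p) G h - 1}

open scoped commutatorElement

namespace Stmt15

open Finset MonoidAlgebra

variable {p : ℕ} [Fact p.Prime] {G : Type*} [Group G] [Fintype G]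

/-- conjugation invariance of coefficients -/
def ConjInv (x : MonoidAlgebra (ZMod p) G) : Prop :=
  ∀ g a : G, x.coeff (g * a * g⁻¹) = x.coeff a

lemma charP : CharP (MonoidAlgebra (ZMod p) G) p := by
  apply charP_of_injective_ringHom (f := MonoidAlgebra.singleOneRingHom (R := ZMod p) (M := G))
  intro a b h
  simpa using congrArg (fun f : MonoidAlgebra (ZMod p) G => f.coeff 1) h

lemma aug_apply (x : MonoidAlgebra (ZMod p) G) : aug p G x = ∑ g : G, x.coeff g := by
  classical
  rw [aug, MonoidAlgebra.lift_apply, Finsupp.sum_fintype]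
  · simp
  · simp

lemma conjInv_isConj {x : MonoidAlgebra (ZMod p) G} (hx : ConjInv x) {a b : G}
    (h : IsConj a b) : x.coeff a = x.coeff b := by
  obtain ⟨u, hu⟩ := isConj_iff.mp h
  rw [← hu, hx]

lemma conjInv_commute {x : MonoidAlgebra (ZMod p) G} (hx : ConjInv x)
    (y : MonoidAlgebra (ZMod p) G) : Commute x y := by
  classical
  have hsingle : ∀ (a : G) (r : ZMod p), Commute x (MonoidAlgebra.single a r) := by
    intro a r
    show x * _ = _ * x
    ext h
    rw [MonoidAlgebra.mul_single_apply, MonoidAlgebra.single_mul_apply, mul_comm]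
    congr 1
    have := hx a⁻¹ (h * a⁻¹)
    simpa [mul_assoc] using this.symm
  rw [← MonoidAlgebra.sum_single y]
  exact Commute.sum_right _ _ _ fun a _ => hsingle a (y.coeff a)

lemma commute_single_conjInv {x : MonoidAlgebra (ZMod p) G}
    (hx : ∀ g : G, MonoidAlgebra.single g (1 : ZMod p) * x = x * MonoidAlgebra.single g 1) :
    ConjInv x := by
  intro g a
  have h := hx g⁻¹
  have h2 := congrArg (fun z : MonoidAlgebra (ZMod p) G => z.coeff (g⁻¹ * (g * a * g⁻¹))) h
  simp only [MonoidAlgebra.single_mul_apply, MonoidAlgebra.mul_single_apply, inv_inv,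
    one_mul, mul_one] at h2
  simpa [mul_assoc] using h2


section Conj

lemma phi_aux (hcomm' : ∀ u v : G, ⁅u, v⁆ ∈ Subgroup.center G) (g u v : G) :
    g⁻¹ * (u * v) * g * (u * v)⁻¹ = (g⁻¹ * u * g * u⁻¹) * (g⁻¹ * v * g * v⁻¹) := by
  have hd : u⁻¹ * (g⁻¹ * v * g * v⁻¹) = (g⁻¹ * v * g * v⁻¹) * u⁻¹ := by
    have h := Subgroup.mem_center_iff.mp (hcomm' g⁻¹ v) u⁻¹
    rwa [commutatorElement_def, inv_inv] at h
  calc g⁻¹ * (u * v) * g * (u * v)⁻¹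
      = g⁻¹ * u * g * ((g⁻¹ * v * g * v⁻¹) * u⁻¹) := by group
    _ = g⁻¹ * u * g * (u⁻¹ * (g⁻¹ * v * g * v⁻¹)) := by rw [← hd]
    _ = (g⁻¹ * u * g * u⁻¹) * (g⁻¹ * v * g * v⁻¹) := by rw [← mul_assoc]

/-- the commutator map `u ↦ ⁅g⁻¹, u⁆` as a homomorphism -/
def phi (hcomm' : ∀ u v : G, ⁅u, v⁆ ∈ Subgroup.center G) (g : G) : G →* G where
  toFun u := g⁻¹ * u * g * u⁻¹
  map_one' := by group
  map_mul' u v := phi_aux hcomm' g u v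

lemma phi_mem {c : G} (hcomm' : ∀ u v : G, ⁅u, v⁆ ∈ Subgroup.center G)
    (hc : commutator G = Subgroup.zpowers c) (g u : G) :
    phi hcomm' g u ∈ Subgroup.zpowers c := by
  rw [← hc, commutator_def]
  have : phi hcomm' g u = ⁅g⁻¹, u⁆ := by
    rw [commutatorElement_def, inv_inv]; rfl
  rw [this]
  exact Subgroup.commutator_mem_commutator (Subgroup.mem_top _) (Subgroup.mem_top _)

lemma exists_pow_lt_of_mem_zpowers {c : G} (hcp : orderOf c = p) {d : G}
    (hd : d ∈ Subgroup.zpowers c) :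
    ∃ k < p, c ^ k = d := by
  have hp : (0 : ℤ) < (p : ℤ) := by
    exact_mod_cast (Fact.out : p.Prime).pos
  obtain ⟨k, hk⟩ := Subgroup.mem_zpowers_iff.mp hd
  have h1 := Int.emod_lt_of_pos k hp
  have h2 := Int.emod_nonneg k (ne_of_gt hp)
  refine ⟨(k % (p : ℤ)).toNat, by omega, ?_⟩
  have : c ^ ((k % (p : ℤ)).toNat : ℤ) = c ^ k := by
    rw [Int.toNat_of_nonneg h2, ← hcp, zpow_mod_orderOf]
  rw [← zpow_natCast, this, hk]

lemma isConj_noncentral_iff {c : G} (hcp : orderOf c = p)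
    (hcomm' : ∀ u v : G, ⁅u, v⁆ ∈ Subgroup.center G)
    (hc : commutator G = Subgroup.zpowers c)
    {g : G} (hg : g ∉ Subgroup.center G) (h : G) :
    IsConj g h ↔ ∃ k < p, h = g * c ^ k := by
  constructor
  · rintro hconj
    obtain ⟨u, hu⟩ := isConj_iff.mp hconj
    have hmem : g⁻¹ * u * g * u⁻¹ ∈ Subgroup.zpowers c := phi_mem hcomm' hc g u
    obtain ⟨k, hk, hck⟩ := exists_pow_lt_of_mem_zpowers hcp hmem
    exact ⟨k, hk, by rw [hck, ← hu]; group⟩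
  · rintro ⟨k, hk, rfl⟩
    have hex : ∃ u₀ : G, phi hcomm' g u₀ ≠ 1 := by
      by_contra hno
      push_neg at hno
      apply hg
      rw [Subgroup.mem_center_iff]
      intro u
      have h1 := hno u
      have h2 : g⁻¹ * u * g = u := by
        have h3 : (g⁻¹ * u * g) * u⁻¹ = 1 := h1
        exact mul_inv_eq_one.mp h3
      calc u * g = g * (g⁻¹ * u * g) := by group
        _ = g * u := by rw [h2]
    obtain ⟨u₀, hu₀⟩ := hex
    obtain ⟨k₀, hk₀lt, hk₀⟩ :=
      exists_pow_lt_of_mem_zpowers hcp (phi_mem hcomm' hc g u₀)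
    have hk₀ne : k₀ ≠ 0 := by
      rintro rfl
      rw [pow_zero] at hk₀
      exact hu₀ hk₀.symm
    have hcast : (k₀ : ZMod p) ≠ 0 := by
      intro h0
      rw [ZMod.natCast_eq_zero_iff] at h0
      have := Nat.le_of_dvd (Nat.pos_of_ne_zero hk₀ne) h0
      omega
    set t := (((k₀ : ZMod p))⁻¹ * (k : ZMod p)).val with ht
    have hmod : k₀ * t ≡ k [MOD p] := by
      haveI : NeZero p := ⟨(Fact.out : p.Prime).ne_zero⟩
      have hval : ((k₀ * t : ℕ) : ZMod p) = (k : ZMod p) := by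
        push_cast
        rw [ht, ZMod.natCast_val, ZMod.cast_id]
        rw [← mul_assoc, mul_inv_cancel₀ hcast, one_mul]
      exact (ZMod.natCast_eq_natCast_iff _ _ _).mp hval
    have hφ : phi hcomm' g (u₀ ^ t) = c ^ k := by
      rw [map_pow, ← hk₀, ← pow_mul]
      rw [← hcp] at hmod
      exact pow_eq_pow_iff_modEq.mpr hmod
    rw [isConj_iff]
    refine ⟨u₀ ^ t, ?_⟩
    have hrw : u₀ ^ t * g * (u₀ ^ t)⁻¹ = g * (g⁻¹ * (u₀ ^ t) * g * (u₀ ^ t)⁻¹) := by group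
    rw [hrw]
    have : g⁻¹ * (u₀ ^ t) * g * (u₀ ^ t)⁻¹ = phi hcomm' g (u₀ ^ t) := rfl
    rw [this, hφ]

lemma isConj_central_iff {g : G} (hg : g ∈ Subgroup.center G) (h : G) :
    IsConj g h ↔ h = g := by
  constructor
  · intro hconj
    obtain ⟨u, hu⟩ := isConj_iff.mp hconj
    rw [← hu, Subgroup.mem_center_iff.mp hg u, mul_assoc, mul_inv_cancel, mul_one]
  · rintro rfl; exact IsConj.refl _

end Conj

section Fib

variable [DecidableEq (ConjClasses G)]

def fib (O : ConjClasses G) : Finset G :=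
  Finset.univ.filter (fun g => ConjClasses.mk g = O)

lemma mem_fib {O : ConjClasses G} {h : G} : h ∈ fib O ↔ ConjClasses.mk h = O := by
  simp [fib]

lemma mk_out (O : ConjClasses G) : ConjClasses.mk (Quotient.out O) = O :=
  Quotient.out_eq O

lemma mk_conj (g a : G) : ConjClasses.mk (g * a * g⁻¹) = ConjClasses.mk a :=
  ConjClasses.mk_eq_mk_iff_isConj.mpr (isConj_iff.mpr ⟨g⁻¹, by group⟩)

lemma fib_mk_central {g : G} (hg : g ∈ Subgroup.center G) :
    fib (ConjClasses.mk g) = {g} := by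
  ext h
  simp only [mem_fib, Finset.mem_singleton, ConjClasses.mk_eq_mk_iff_isConj]
  rw [isConj_comm, isConj_central_iff hg]

lemma fib_mk_noncentral [DecidableEq G] {c : G} (hcp : orderOf c = p)
    (hcomm' : ∀ u v : G, ⁅u, v⁆ ∈ Subgroup.center G)
    (hc : commutator G = Subgroup.zpowers c)
    {g : G} (hg : g ∉ Subgroup.center G) :
    fib (ConjClasses.mk g) = Finset.image (fun i : ZMod p => g * c ^ i.val) Finset.univ := by
  haveI : NeZero p := ⟨(Fact.out : p.Prime).ne_zero⟩
  ext h
  simp only [mem_fib, Finset.mem_image, Finset.mem_univ, true_and,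
    ConjClasses.mk_eq_mk_iff_isConj]
  rw [isConj_comm, isConj_noncentral_iff hcp hcomm' hc hg]
  constructor
  · rintro ⟨k, hk, rfl⟩
    exact ⟨(k : ZMod p), by rw [ZMod.val_natCast, Nat.mod_eq_of_lt hk]⟩
  · rintro ⟨i, rfl⟩
    exact ⟨i.val, ZMod.val_lt i, rfl⟩

lemma mul_pow_inj {c : G} (hcp : orderOf c = p) (g : G) :
    Function.Injective (fun i : ZMod p => g * c ^ i.val) := by
  haveI : NeZero p := ⟨(Fact.out : p.Prime).ne_zero⟩
  intro i j hij
  have h1 : c ^ i.val = c ^ j.val := mul_left_cancel hij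
  rw [pow_eq_pow_iff_modEq, hcp] at h1
  have h2 := ZMod.val_lt i
  have h3 := ZMod.val_lt j
  have h5 : i.val % p = j.val % p := h1
  rw [Nat.mod_eq_of_lt h2, Nat.mod_eq_of_lt h3] at h5
  exact ZMod.val_injective p h5

end Fib

section Alg

variable [NeZero p]

def Chat (c : G) : MonoidAlgebra (ZMod p) G :=
  ∑ i : ZMod p, MonoidAlgebra.single (c ^ i.val) 1

lemma single_central_commute {z : G} (hz : z ∈ Subgroup.center G)
    (y : MonoidAlgebra (ZMod p) G) :
    Commute (MonoidAlgebra.single z (1 : ZMod p)) y :=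
  MonoidAlgebra.single_commute
    (fun a => (Subgroup.mem_center_iff.mp hz a).symm) (fun b => Commute.one_left b) y

lemma single_mul_Chat {c : G} (hcp : orderOf c = p) (i : ZMod p) :
    MonoidAlgebra.single (c ^ i.val) (1 : ZMod p) * Chat c = Chat c := by
  haveI : NeZero p := ⟨(Fact.out : p.Prime).ne_zero⟩
  have key : ∀ i j : ZMod p, c ^ i.val * c ^ j.val = c ^ ((i + j).val) := by
    intro i j
    rw [← pow_add]
    symm
    rw [pow_eq_pow_iff_modEq, hcp, ZMod.val_add]
    exact Nat.mod_modEq _ p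
  rw [Chat, Finset.mul_sum]
  have h1 : ∀ j : ZMod p,
      MonoidAlgebra.single (c ^ i.val) (1 : ZMod p) * MonoidAlgebra.single (c ^ j.val) 1
        = MonoidAlgebra.single (c ^ ((i + j).val)) 1 := by
    intro j
    rw [MonoidAlgebra.single_mul_single, one_mul, key]
  rw [Finset.sum_congr rfl fun j _ => h1 j]
  exact Fintype.sum_equiv (Equiv.addLeft i)
    (fun j => MonoidAlgebra.single (c ^ ((i + j).val)) 1)
    (fun j => MonoidAlgebra.single (c ^ j.val) 1) (fun j => rfl)

lemma Chat_sq {c : G} (hcp : orderOf c = p) :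
    (Chat c : MonoidAlgebra (ZMod p) G) * Chat c = 0 := by
  haveI : NeZero p := ⟨(Fact.out : p.Prime).ne_zero⟩
  haveI := charP (p := p) (G := G)
  nth_rewrite 1 [Chat]
  rw [Finset.sum_mul]
  rw [Finset.sum_congr rfl fun i _ => single_mul_Chat hcp i]
  rw [Finset.sum_const, Finset.card_univ, ZMod.card, nsmul_eq_mul]
  rw [show ((p : ℕ) : MonoidAlgebra (ZMod p) G) = 0 from CharP.cast_eq_zero _ p, zero_mul]

lemma noncentral_sum_sq {c : G} (hcZ : c ∈ Subgroup.center G) (hcp : orderOf c = p) (g : G) :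
    (∑ i : ZMod p, MonoidAlgebra.single (g * c ^ i.val) (1 : ZMod p)) *
      (∑ i : ZMod p, MonoidAlgebra.single (g * c ^ i.val) (1 : ZMod p)) = 0 := by
  have hS : (∑ i : ZMod p, MonoidAlgebra.single (g * c ^ i.val) (1 : ZMod p))
      = MonoidAlgebra.single g 1 * Chat c := by
    rw [Chat, Finset.mul_sum]
    exact Finset.sum_congr rfl fun i _ => by
      rw [MonoidAlgebra.single_mul_single, one_mul]
  have hcom : (Chat c : MonoidAlgebra (ZMod p) G) * MonoidAlgebra.single g (1 : ZMod p)
      = MonoidAlgebra.single g 1 * Chat c := by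
    rw [Chat, Finset.sum_mul, Finset.mul_sum]
    exact Finset.sum_congr rfl fun i _ =>
      single_central_commute (Subgroup.pow_mem _ hcZ _) _
  set a := MonoidAlgebra.single g (1 : ZMod p)
  set b := (Chat c : MonoidAlgebra (ZMod p) G)
  rw [hS]
  calc a * b * (a * b) = a * (b * a * b) := by rw [mul_assoc, mul_assoc]
    _ = a * (a * b * b) := by rw [hcom]
    _ = 0 := by rw [mul_assoc a b b, Chat_sq hcp, mul_zero, mul_zero]

lemma isNilpotent_single_sub_one (hpG : IsPGroup p G) (z : G) :
    IsNilpotent (MonoidAlgebra.single z (1 : ZMod p) - 1) := by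
  haveI := charP (p := p) (G := G)
  obtain ⟨k, hk⟩ := hpG z
  refine ⟨p ^ k, ?_⟩
  rw [sub_pow_char_pow_of_commute p k (Commute.one_right _)]
  rw [MonoidAlgebra.single_pow, hk, one_pow, one_pow, ← MonoidAlgebra.one_def, sub_self]

end Alg

section Nilp

variable [NeZero p] [DecidableEq G] [DecidableEq (ConjClasses G)] [Fintype (ConjClasses G)]

lemma sumfib_apply (O : ConjClasses G) (h : G) :
    (∑ g ∈ fib O, MonoidAlgebra.single g (1 : ZMod p)).coeff h = if h ∈ fib O then 1 else 0 := by
  rw [MonoidAlgebra.coeff_sum, Finset.sum_apply']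
  simp only [MonoidAlgebra.coeff_single]
  rw [Finset.sum_congr rfl fun g _ => Finsupp.single_apply (a := g) (a' := h) (b := (1 : ZMod p))]
  exact Finset.sum_ite_eq' (fib O) h (fun _ => (1 : ZMod p))

lemma sumfib_conjInv (O : ConjClasses G) :
    ConjInv (∑ g ∈ fib O, MonoidAlgebra.single g (1 : ZMod p)) := by
  intro g a
  rw [sumfib_apply, sumfib_apply]
  simp only [mem_fib, mk_conj]

lemma isNilpotent_of_conjInv {c : G} (hpG : IsPGroup p G) (hcZ : c ∈ Subgroup.center G)
    (hcp : orderOf c = p) (hcomm' : ∀ u v : G, ⁅u, v⁆ ∈ Subgroup.center G)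
    (hc : commutator G = Subgroup.zpowers c)
    {x : MonoidAlgebra (ZMod p) G} (hx : ConjInv x) (h0 : aug p G x = 0) :
    IsNilpotent x := by
  set SO : ConjClasses G → MonoidAlgebra (ZMod p) G :=
    fun O => ∑ g ∈ fib O, MonoidAlgebra.single g (1 : ZMod p) with hSO
  set w : ConjClasses G → ZMod p := fun O => ((fib O).card : ZMod p) with hw
  -- x agrees on fibers
  have hxfib : ∀ (O : ConjClasses G), ∀ g ∈ fib O, x.coeff g = x.coeff (Quotient.out O) := by
    intro O g hg
    apply conjInv_isConj hx
    rw [← ConjClasses.mk_eq_mk_iff_isConj, mk_out, ← mem_fib]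
    exact hg
  -- step 1
  have h1 : ∑ O : ConjClasses G, x.coeff (Quotient.out O) • SO O = x := by
    have e1 : ∀ O : ConjClasses G, x.coeff (Quotient.out O) • SO O
        = ∑ g ∈ fib O, MonoidAlgebra.single g (x.coeff g) := by
      intro O
      rw [hSO, Finset.smul_sum]
      refine Finset.sum_congr rfl fun g hg => ?_
      rw [MonoidAlgebra.smul_single, smul_eq_mul, mul_one, hxfib O g hg]
    rw [Finset.sum_congr rfl fun O _ => e1 O]
    rw [show ∑ O : ConjClasses G, ∑ g ∈ fib O, MonoidAlgebra.single g (x.coeff g)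
        = ∑ g : G, MonoidAlgebra.single g (x.coeff g) from
      Finset.sum_fiberwise Finset.univ (fun g => ConjClasses.mk g)
        (fun g => MonoidAlgebra.single g (x.coeff g))]
    ext a
    rw [MonoidAlgebra.coeff_sum, Finset.sum_apply']
    simp only [MonoidAlgebra.coeff_single]
    rw [Finset.sum_congr rfl fun g _ => Finsupp.single_apply (b := x.coeff g)]
    rw [Finset.sum_ite_eq' Finset.univ a (fun g => x.coeff g)]
    simp
  -- step 2
  have h2 : ∑ O : ConjClasses G, x.coeff (Quotient.out O) * w O = 0 := by
    have e2 : ∀ O : ConjClasses G, x.coeff (Quotient.out O) * w O = ∑ g ∈ fib O, x.coeff g := by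
      intro O
      rw [Finset.sum_congr rfl fun g hg => hxfib O g hg, Finset.sum_const, nsmul_eq_mul, hw,
        mul_comm]
    rw [Finset.sum_congr rfl fun O _ => e2 O]
    rw [show ∑ O : ConjClasses G, ∑ g ∈ fib O, x.coeff g = ∑ g : G, x.coeff g from
      Finset.sum_fiberwise Finset.univ (fun g => ConjClasses.mk g) (fun g => x.coeff g)]
    rw [← aug_apply, h0]
  -- decomposition
  have decomp : x = ∑ O : ConjClasses G, x.coeff (Quotient.out O) • (SO O - w O • 1) := by
    have : ∀ O : ConjClasses G, x.coeff (Quotient.out O) • (SO O - w O • 1)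
        = x.coeff (Quotient.out O) • SO O - (x.coeff (Quotient.out O) * w O) • 1 := by
      intro O
      rw [smul_sub, smul_smul]
    rw [Finset.sum_congr rfl fun O _ => this O, Finset.sum_sub_distrib, h1,
      ← Finset.sum_smul, h2, zero_smul, sub_zero]
  rw [decomp]
  -- commuting
  have hcomm2 : ∀ (O : ConjClasses G) (y : MonoidAlgebra (ZMod p) G),
      Commute (SO O - w O • 1) y := by
    intro O y
    exact Commute.sub_left (conjInv_commute (sumfib_conjInv O) y)
      ((Commute.one_left y).smul_left (w O))
  apply Commute.isNilpotent_sum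
  · -- nilpotency of each term
    intro O _
    apply IsNilpotent.smul
    by_cases hcen : Quotient.out O ∈ Subgroup.center G
    · have hfib : fib O = {Quotient.out O} := by
        rw [← mk_out O, fib_mk_central hcen, mk_out O]
      have hw1 : w O = 1 := by
        show ((fib O).card : ZMod p) = 1
        rw [hfib]; simp
      have hSO1 : SO O = MonoidAlgebra.single (Quotient.out O) (1 : ZMod p) := by
        show ∑ g ∈ fib O, MonoidAlgebra.single g (1 : ZMod p) = _
        rw [hfib, Finset.sum_singleton]
      rw [hSO1, hw1, one_smul]
      exact isNilpotent_single_sub_one hpG _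
    · have hfib : fib O = Finset.image (fun i : ZMod p => Quotient.out O * c ^ i.val)
          Finset.univ := by
        rw [← mk_out O, fib_mk_noncentral hcp hcomm' hc hcen, mk_out O]
      have hwp : w O = 0 := by
        show ((fib O).card : ZMod p) = 0
        rw [hfib, Finset.card_image_of_injective _ (mul_pow_inj hcp _),
          Finset.card_univ, ZMod.card, ZMod.natCast_self]
      have hSOim : SO O = ∑ i : ZMod p,
          MonoidAlgebra.single (Quotient.out O * c ^ i.val) (1 : ZMod p) := by
        show ∑ g ∈ fib O, MonoidAlgebra.single g (1 : ZMod p) = _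
        rw [hfib, Finset.sum_image (fun a _ b _ hab => mul_pow_inj hcp _ hab)]
      rw [hwp, zero_smul, sub_zero, hSOim]
      exact ⟨2, by rw [sq]; exact noncentral_sum_sq hcZ hcp _⟩
  · intro O O' _ _
    exact ((hcomm2 O _).smul_left _).symm.smul_left _ |>.symm
end Nilp

section Count

variable [NeZero p]

lemma fiber_card {α : Type*} [Fintype α] (w : α → ZMod p)
    (F₀ : α → ZMod p) (h0 : ∑ a, w a * F₀ a = 1) :
    Nat.card {F : α → ZMod p // ∑ a, w a * F a = 1} = p ^ (Fintype.card α - 1) := by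
  classical
  set L : (α → ZMod p) →+ ZMod p :=
    AddMonoidHom.mk' (fun F => ∑ a, w a * F a)
      (by intro F F'; simp [mul_add, Finset.sum_add_distrib]) with hL
  have hLF : ∀ F, L F = ∑ a, w a * F a := fun F => rfl
  have hL0 : L F₀ = 1 := h0
  have hsurj : Function.Surjective L := by
    intro t
    refine ⟨t • F₀, ?_⟩
    rw [hLF]
    have : ∀ a, w a * (t • F₀) a = t * (w a * F₀ a) := by
      intro a; simp [Pi.smul_apply, smul_eq_mul]; ring
    rw [Finset.sum_congr rfl fun a _ => this a, ← Finset.mul_sum, h0, mul_one]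
  have hequiv : {F : α → ZMod p // ∑ a, w a * F a = 1} ≃ L.ker := by
    refine ⟨fun F => ⟨F.1 - F₀, ?_⟩, fun K => ⟨K.1 + F₀, ?_⟩, ?_, ?_⟩
    · rw [AddMonoidHom.mem_ker, map_sub, hL0]
      have : L F.1 = 1 := F.2
      rw [this, sub_self]
    · have hK : L K.1 = 0 := K.2
      show L (K.1 + F₀) = 1
      rw [map_add, hK, hL0, zero_add]
    · intro F; apply Subtype.ext; simp
    · intro K; apply Subtype.ext; simp
  rw [Nat.card_congr hequiv]
  have hcard : Nat.card (α → ZMod p)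
      = Nat.card ((α → ZMod p) ⧸ L.ker) * Nat.card L.ker :=
    AddSubgroup.card_eq_card_quotient_mul_card_addSubgroup L.ker
  have hquot : Nat.card ((α → ZMod p) ⧸ L.ker) = p := by
    rw [Nat.card_congr (QuotientAddGroup.quotientKerEquivRange L).toEquiv]
    rw [AddMonoidHom.range_eq_top_of_surjective L hsurj]
    rw [Nat.card_congr AddSubgroup.topEquiv.toEquiv, Nat.card_zmod]
  have hfun : Nat.card (α → ZMod p) = p ^ Fintype.card α := by
    rw [Nat.card_fun, Nat.card_zmod, Nat.card_eq_fintype_card]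
  have hα : Nonempty α := by
    by_contra hno
    rw [not_nonempty_iff] at hno
    rw [Finset.univ_eq_empty, Finset.sum_empty] at h0
    exact zero_ne_one h0
  have hk1 : 1 ≤ Fintype.card α := Fintype.card_pos
  rw [hfun, hquot] at hcard
  have : p ^ Fintype.card α = p ^ (Fintype.card α - 1) * p := by
    rw [← pow_succ, Nat.sub_add_cancel hk1]
  rw [this, mul_comm (p ^ (Fintype.card α - 1)) p] at hcard
  exact (Nat.eq_of_mul_eq_mul_left (Fact.out : p.Prime).pos hcard).symm

variable [DecidableEq (ConjClasses G)] [Fintype (ConjClasses G)]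

lemma weighted_sum_eq_aug {x : MonoidAlgebra (ZMod p) G} (hx : ConjInv x) :
    ∑ O : ConjClasses G, ((fib O).card : ZMod p) * x.coeff (Quotient.out O) = aug p G x := by
  have hxfib : ∀ (O : ConjClasses G), ∀ g ∈ fib O, x.coeff g = x.coeff (Quotient.out O) := by
    intro O g hg
    apply conjInv_isConj hx
    rw [← ConjClasses.mk_eq_mk_iff_isConj, mk_out, ← mem_fib]
    exact hg
  have e2 : ∀ O : ConjClasses G,
      ((fib O).card : ZMod p) * x.coeff (Quotient.out O) = ∑ g ∈ fib O, x.coeff g := by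
    intro O
    rw [Finset.sum_congr rfl fun g hg => hxfib O g hg, Finset.sum_const, nsmul_eq_mul]
  rw [Finset.sum_congr rfl fun O _ => e2 O]
  rw [show ∑ O : ConjClasses G, ∑ g ∈ fib O, x.coeff g = ∑ g : G, x.coeff g from
    Finset.sum_fiberwise Finset.univ (fun g => ConjClasses.mk g) (fun g => x.coeff g)]
  rw [aug_apply]

lemma card_T_eq :
    Nat.card {x : MonoidAlgebra (ZMod p) G // ConjInv x ∧ aug p G x = 1}
      = Nat.card {F : ConjClasses G → ZMod p //
          ∑ O : ConjClasses G, ((fib O).card : ZMod p) * F O = 1} := by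
  apply Nat.card_congr
  refine Equiv.ofBijective
    (fun x => ⟨fun O => x.1.coeff (Quotient.out O), ?_⟩) ⟨?_, ?_⟩
  · rw [weighted_sum_eq_aug x.2.1, x.2.2]
  · rintro ⟨x, hx, hx1⟩ ⟨y, hy, hy1⟩ hxy
    have h := congrFun (Subtype.mk_eq_mk.mp hxy)
    apply Subtype.ext
    ext g
    have h1 : x.coeff g = x.coeff (Quotient.out (ConjClasses.mk g)) := by
      apply conjInv_isConj hx
      rw [← ConjClasses.mk_eq_mk_iff_isConj, mk_out]
    have h2 : y.coeff g = y.coeff (Quotient.out (ConjClasses.mk g)) := by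
      apply conjInv_isConj hy
      rw [← ConjClasses.mk_eq_mk_iff_isConj, mk_out]
    rw [h1, h2]
    exact h (ConjClasses.mk g)
  · rintro ⟨F, hF⟩
    set x : MonoidAlgebra (ZMod p) G :=
      MonoidAlgebra.ofCoeff (Finsupp.equivFunOnFinite.symm (fun g => F (ConjClasses.mk g))) with hxdef
    have hxapp : ∀ g : G, x.coeff g = F (ConjClasses.mk g) := fun g => rfl
    have hxinv : ConjInv x := by
      intro g a
      rw [hxapp, hxapp, mk_conj]
    have hxaug : aug p G x = 1 := by
      rw [aug_apply, Finset.sum_congr rfl fun g _ => hxapp g]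
      rw [← Finset.sum_fiberwise' Finset.univ (fun g => ConjClasses.mk g) F]
      rw [Finset.sum_congr rfl fun O (_ : O ∈ Finset.univ) =>
        (by rw [Finset.sum_const, nsmul_eq_mul] :
          ∑ _i ∈ Finset.univ.filter (fun i => ConjClasses.mk i = O), F O
            = ((Finset.univ.filter (fun i => ConjClasses.mk i = O)).card : ZMod p) * F O)]
      exact hF
    refine ⟨⟨x, hxinv, hxaug⟩, Subtype.ext (funext fun O => ?_)⟩
    show x.coeff (Quotient.out O) = F O
    rw [hxapp, mk_out]
  
end Count

section Units

lemma aug_single (g : G) (r : ZMod p) : aug p G (MonoidAlgebra.single g r) = r := by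
  classical
  rw [aug_apply]
  simp only [MonoidAlgebra.coeff_single]
  rw [Finset.sum_congr rfl fun h _ => Finsupp.single_apply (a := g) (a' := h) (b := r)]
  rw [Finset.sum_ite_eq Finset.univ g (fun _ => r)]
  simp

/-- a group element as a unit of the group algebra -/
def gUnit (g : G) : (MonoidAlgebra (ZMod p) G)ˣ where
  val := MonoidAlgebra.single g 1
  inv := MonoidAlgebra.single g⁻¹ 1
  val_inv := by
    rw [MonoidAlgebra.single_mul_single, one_mul, mul_inv_cancel, ← MonoidAlgebra.one_def]
  inv_val := by
    rw [MonoidAlgebra.single_mul_single, one_mul, inv_mul_cancel, ← MonoidAlgebra.one_def]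

lemma mem_normUnits_iff (u : (MonoidAlgebra (ZMod p) G)ˣ) :
    u ∈ normUnits p G ↔ aug p G (u : MonoidAlgebra (ZMod p) G) = 1 := by
  rw [normUnits, MonoidHom.mem_ker, Units.ext_iff]
  rfl

lemma gUnit_mem (g : G) : gUnit g ∈ normUnits p G := by
  rw [mem_normUnits_iff]
  exact aug_single g 1

lemma conjInv_one : ConjInv (1 : MonoidAlgebra (ZMod p) G) := by
  classical
  intro g a
  rw [MonoidAlgebra.one_def, MonoidAlgebra.coeff_single]
  rw [Finsupp.single_apply, Finsupp.single_apply]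
  have : (1 = g * a * g⁻¹) ↔ (1 = a) := by
    constructor
    · intro h
      have h2 : g * a * g⁻¹ = 1 := h.symm
      have h3 : a = g⁻¹ * 1 * g := by
        rw [← h2]; group
      rw [h3]; group
    · rintro rfl; rw [mul_one, mul_inv_cancel]
  simp only [this]

lemma conjInv_sub {x y : MonoidAlgebra (ZMod p) G} (hx : ConjInv x) (hy : ConjInv y) :
    ConjInv (x - y) := by
  intro g a
  rw [MonoidAlgebra.coeff_sub, Finsupp.sub_apply, Finsupp.sub_apply, hx, hy]

lemma card_centerOf_eq {c : G} (hpG : IsPGroup p G) (hcZ : c ∈ Subgroup.center G)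
    (hcp : orderOf c = p) (hcomm' : ∀ u v : G, ⁅u, v⁆ ∈ Subgroup.center G)
    (hc : commutator G = Subgroup.zpowers c) [NeZero p] [DecidableEq G]
    [DecidableEq (ConjClasses G)] [Fintype (ConjClasses G)] :
    Nat.card ↥(centerOf (normUnits p G))
      = Nat.card {x : MonoidAlgebra (ZMod p) G // ConjInv x ∧ aug p G x = 1} := by
  apply Nat.card_congr
  refine Equiv.ofBijective (fun u =>
    ⟨((u : (MonoidAlgebra (ZMod p) G)ˣ) : MonoidAlgebra (ZMod p) G), ?_, ?_⟩) ⟨?_, ?_⟩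
  · -- ConjInv
    have hcentral := (Subgroup.mem_inf.mp u.2).1
    apply commute_single_conjInv
    intro g
    have h := Subgroup.mem_centralizer_iff.mp hcentral (gUnit g) (gUnit_mem g)
    have h2 := congrArg (Units.val) h
    simpa [gUnit] using h2
  · exact (mem_normUnits_iff _).mp (Subgroup.mem_inf.mp u.2).2
  · intro u v huv
    apply Subtype.ext
    apply Units.ext
    exact Subtype.mk_eq_mk.mp huv
  · rintro ⟨x, hx, hx1⟩
    have hnil : IsNilpotent (x - 1) := by
      apply isNilpotent_of_conjInv hpG hcZ hcp hcomm' hc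
      · exact conjInv_sub hx conjInv_one
      · rw [map_sub, map_one, hx1, sub_self]
    have hunit : IsUnit x := by
      have h := hnil.isUnit_one_add
      rwa [add_sub_cancel] at h
    have hval : (hunit.unit : MonoidAlgebra (ZMod p) G) = x := hunit.unit_spec
    have hmem : hunit.unit ∈ centerOf (normUnits p G) := by
      rw [centerOf, Subgroup.mem_inf]
      constructor
      · rw [Subgroup.mem_centralizer_iff]
        intro v _
        apply Units.ext
        show ((v * hunit.unit : (MonoidAlgebra (ZMod p) G)ˣ) : MonoidAlgebra (ZMod p) G)
          = ((hunit.unit * v : (MonoidAlgebra (ZMod p) G)ˣ) : MonoidAlgebra (ZMod p) G)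
        rw [Units.val_mul, Units.val_mul, hval]
        exact (conjInv_commute hx (v : MonoidAlgebra (ZMod p) G)).symm
      · rw [mem_normUnits_iff, hval, hx1]
    exact ⟨⟨hunit.unit, hmem⟩, Subtype.ext hval⟩

end Units

end Stmt15



/-- `|ζ(V(𝔽_pG))| = p^{(|G| + (p-1)|ζG| - p)/p}`. -/
theorem stmt_15 {p n m : ℕ} [Fact p.Prime] (hp : Odd p) (hm : 1 ≤ m) (hmn : m ≤ n)
    {G : Type*} [Group G] [Fintype G] (hpG : IsPGroup p G)
    (N : Subgroup G) (hNZ : N ≤ Subgroup.center G)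
    (hNiso : Nonempty (↥N ≃* Multiplicative (ZMod (p ^ n)) × Multiplicative (ZMod (p ^ m))))
    (hpow : ∀ x : G, x ^ p ∈ N) (hcomm : ∀ x y : G, ⁅x, y⁆ ∈ N)
    (c : G) (hc : commutator G = Subgroup.zpowers c) (hcp : orderOf c = p) :
    Nat.card ↥(centerOf (normUnits p G)) =
      p ^ ((Nat.card G + (p - 1) * Nat.card ↥(Subgroup.center G) - p) / p) := by
  classical
  haveI : NeZero p := ⟨(Fact.out : p.Prime).ne_zero⟩
  letI : Fintype (ConjClasses G) := Fintype.ofFinite _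
  have hcomm' : ∀ u v : G, ⁅u, v⁆ ∈ Subgroup.center G := fun u v => hNZ (hcomm u v)
  have hcZ : c ∈ Subgroup.center G := by
    apply hNZ
    have h1 : commutator G ≤ N := by
      rw [commutator_def]
      exact Subgroup.commutator_le.mpr fun u _ v _ => hcomm u v
    exact h1 (hc ▸ Subgroup.mem_zpowers c)
  have hout1 : Quotient.out (ConjClasses.mk (1 : G)) = 1 := by
    have h := Stmt15.mk_out (ConjClasses.mk (1 : G))
    rw [ConjClasses.mk_eq_mk_iff_isConj] at h
    exact isConj_one_left.mp h
  have hF0 : ∑ O : ConjClasses G, ((Stmt15.fib O).card : ZMod p) *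
      (if O = ConjClasses.mk 1 then (1 : ZMod p) else 0) = 1 := by
    simp only [mul_ite, mul_one, mul_zero]
    rw [Finset.sum_ite_eq' Finset.univ (ConjClasses.mk (1 : G))
      (fun O => ((Stmt15.fib O).card : ZMod p))]
    rw [if_pos (Finset.mem_univ _)]
    rw [Stmt15.fib_mk_central (Subgroup.center G).one_mem]
    simp
  rw [Stmt15.card_centerOf_eq hpG hcZ hcp hcomm' hc, Stmt15.card_T_eq,
    Stmt15.fiber_card _ (fun O => if O = ConjClasses.mk 1 then 1 else 0) hF0]
  congr 1
  -- class counting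
  set Qc := Finset.univ.filter
    (fun O : ConjClasses G => Quotient.out O ∈ Subgroup.center G) with hQc
  set Qn := Finset.univ.filter
    (fun O : ConjClasses G => ¬ Quotient.out O ∈ Subgroup.center G) with hQn
  have hksplit : Qc.card + Qn.card = Fintype.card (ConjClasses G) := by
    rw [hQc, hQn, Finset.card_filter_add_card_filter_not, Finset.card_univ]
  have hfibcard : ∀ O : ConjClasses G, (Stmt15.fib O).card
      = if Quotient.out O ∈ Subgroup.center G then 1 else p := by
    intro O
    by_cases hcen : Quotient.out O ∈ Subgroup.center G
    · rw [if_pos hcen, ← Stmt15.mk_out O, Stmt15.fib_mk_central hcen, Finset.card_singleton]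
    · rw [if_neg hcen, ← Stmt15.mk_out O, Stmt15.fib_mk_noncentral hcp hcomm' hc hcen,
        Finset.card_image_of_injective _ (Stmt15.mul_pow_inj hcp _),
        Finset.card_univ, ZMod.card]
  have hG : Fintype.card G = Qc.card + Qn.card * p := by
    rw [← Finset.card_univ, Finset.card_eq_sum_card_fiberwise
      (fun g (_ : g ∈ Finset.univ) => Finset.mem_univ (ConjClasses.mk g))]
    have hstep : ∀ O : ConjClasses G,
        Finset.filter (fun a => ConjClasses.mk a = O) Finset.univ = Stmt15.fib O := by
      intro O
      simp [Stmt15.fib]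
    rw [Finset.sum_congr rfl fun O (_ : O ∈ Finset.univ) => by rw [hstep O, hfibcard O]]
    refine (@Finset.sum_ite _ _ _ _ _ (fun O => Subgroup.decidableMemCenter _) (fun _ => 1) (fun _ => p)).trans ?_
    rw [Finset.sum_const, Finset.sum_const, smul_eq_mul, smul_eq_mul, mul_one]
    congr
  have hZc : Nat.card ↥(Subgroup.center G) = Qc.card := by
    rw [Nat.card_eq_fintype_card, Fintype.card_subtype]
    apply Finset.card_bij (fun (z : G) (_ : z ∈ Finset.univ.filter
      (fun x => x ∈ Subgroup.center G)) => ConjClasses.mk z)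
    · intro z hz
      have hzc : z ∈ Subgroup.center G := (Finset.mem_filter.mp hz).2
      rw [hQc, Finset.mem_filter]
      refine ⟨Finset.mem_univ _, ?_⟩
      have h := Stmt15.mk_out (ConjClasses.mk z)
      rw [ConjClasses.mk_eq_mk_iff_isConj] at h
      have h2 : Quotient.out (ConjClasses.mk z) = z :=
        (Stmt15.isConj_central_iff hzc _).mp h.symm
      rw [h2]; exact hzc
    · intro z hz z' hz' hmk
      rw [ConjClasses.mk_eq_mk_iff_isConj] at hmk
      have hzc : z ∈ Subgroup.center G := (Finset.mem_filter.mp hz).2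
      exact ((Stmt15.isConj_central_iff hzc _).mp hmk).symm
    · intro O hO
      have hcen : Quotient.out O ∈ Subgroup.center G := (Finset.mem_filter.mp hO).2
      exact ⟨Quotient.out O, Finset.mem_filter.mpr ⟨Finset.mem_univ _, hcen⟩, Stmt15.mk_out O⟩
  have hk1 : 1 ≤ Qc.card := by
    apply Finset.card_pos.mpr
    refine ⟨ConjClasses.mk 1, ?_⟩
    rw [hQc, Finset.mem_filter]
    exact ⟨Finset.mem_univ _, by rw [hout1]; exact (Subgroup.center G).one_mem⟩
  rw [Nat.card_eq_fintype_card (α := G), hG, hZc, ← hksplit]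
  have hp1 : 1 ≤ p := (Fact.out : p.Prime).one_le
  obtain ⟨q, rfl⟩ : ∃ q, p = q + 1 := ⟨p - 1, by omega⟩
  have hnum : Qc.card + Qn.card * (q + 1) + (q + 1 - 1) * Qc.card
      = (Qc.card + Qn.card) * (q + 1) := by
    simp only [Nat.add_sub_cancel]
    ring
  rw [hnum]
  obtain ⟨s, hs⟩ : ∃ s, Qc.card + Qn.card = s + 1 := ⟨Qc.card + Qn.card - 1, by omega⟩
  rw [hs]
  have hnum2 : (s + 1) * (q + 1) - (q + 1) = s * (q + 1) := by
    have : (s + 1) * (q + 1) = s * (q + 1) + (q + 1) := by ring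
    omega
  rw [hnum2, Nat.mul_div_cancel _ (by omega : 0 < q + 1)]
  omega

end
end

section
/- For every integer l ≥ 2, the subgroup of V(𝔽_pG) generated by p^l-th powers equals the group of normalized units over the subgroup G^{p^l}: V(𝔽_pG)^{p^l} = V(𝔽_p G^{p^l}). In particular, for every normalized unit α = Σ_{g∈G} α_g g one has α^{p^l} = Σ_{g∈G} α_g g^{p^l}. -/
noncomputable section

open scoped commutatorElement

/-! ### Auxiliary machinery for `stmt_16` -/

section Stmt16Aux

open Finsupp

variable {p : ℕ} [Fact p.Prime] {G : Type*} [Group G]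

/-- `mapDomain`, with the type spelled using `MonoidAlgebra`. -/
def s16MapDom {H : Type*} (s : H → G) (w : MonoidAlgebra (ZMod p) H) :
    MonoidAlgebra (ZMod p) G :=
  MonoidAlgebra.mapDomain s w

lemma s16_mapDom_comp {H K : Type*} (s : H → G) (t : K → H) (w : MonoidAlgebra (ZMod p) K) :
    MonoidAlgebra.mapDomain s (MonoidAlgebra.mapDomain t w) = MonoidAlgebra.mapDomain (s ∘ t) w :=
  congrArg MonoidAlgebra.ofCoeff (Finsupp.mapDomain_comp).symm

/-- The coefficientwise power map `Σ α_g g ↦ Σ α_g g^q`. -/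
def s16PowMap (q : ℕ) (α : MonoidAlgebra (ZMod p) G) : MonoidAlgebra (ZMod p) G :=
  s16MapDom (· ^ q) α

variable (p) in
/-- The two-sided ideal generated by `c - 1` for central `c`. -/
def s16Ic (c : G) : Ideal (MonoidAlgebra (ZMod p) G) :=
  Ideal.span {MonoidAlgebra.of (ZMod p) G c - 1}

lemma s16CharR : CharP (MonoidAlgebra (ZMod p) G) p :=
  charP_of_injective_algebraMap' (ZMod p) p

lemma s16_commute_single_of_center {g : G} (hg : g ∈ Subgroup.center G) (x : ZMod p)
    (b : MonoidAlgebra (ZMod p) G) : Commute (MonoidAlgebra.single g x) b := by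
  induction b using MonoidAlgebra.induction_on with
  | of h =>
      show MonoidAlgebra.single g x * MonoidAlgebra.of (ZMod p) G h
        = MonoidAlgebra.of (ZMod p) G h * MonoidAlgebra.single g x
      rw [MonoidAlgebra.of_apply, MonoidAlgebra.single_mul_single,
        MonoidAlgebra.single_mul_single, mul_one, one_mul,
        (Subgroup.mem_center_iff.mp hg h)]
  | add f1 f2 h1 h2 => exact h1.add_right h2
  | smul r f hf => exact hf.smul_right r

lemma s16_aug_apply_eq_sum (α : MonoidAlgebra (ZMod p) G) :
    aug p G α = α.coeff.sum fun _ a => a := by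
  simp [aug, MonoidAlgebra.lift_apply]

lemma s16_aug_mapDom {H : Type*} [Group H] (f : H → G) (α : MonoidAlgebra (ZMod p) H) :
    aug p G (s16MapDom f α) = aug p H α := by
  rw [s16_aug_apply_eq_sum, s16_aug_apply_eq_sum]
  exact Finsupp.sum_mapDomain_index (fun _ => rfl) (fun _ _ _ => rfl)

lemma s16_mem_normUnits {u : (MonoidAlgebra (ZMod p) G)ˣ} :
    u ∈ normUnits p G ↔ aug p G (u : MonoidAlgebra (ZMod p) G) = 1 := by
  rw [normUnits, MonoidHom.mem_ker, Units.ext_iff]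
  rfl

lemma s16_commute_of_support_center {α : MonoidAlgebra (ZMod p) G}
    (h : ∀ g ∈ α.coeff.support, g ∈ Subgroup.center G) (b : MonoidAlgebra (ZMod p) G) :
    Commute α b := by
  have : α = α.coeff.sum fun g x => MonoidAlgebra.single g x := (MonoidAlgebra.sum_coeff_single α).symm
  rw [this, Finsupp.sum]
  exact Commute.sum_left _ _ _ fun g hg => s16_commute_single_of_center (h g hg) _ b

lemma s16_pow_p_of_support_center [CharP (MonoidAlgebra (ZMod p) G) p]
    (α : MonoidAlgebra (ZMod p) G)
    (h : ∀ g ∈ α.coeff.support, g ∈ Subgroup.center G) :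
    α ^ p = MonoidAlgebra.mapDomain (· ^ p) α := by
  induction α using MonoidAlgebra.induction with
  | zero => simp [zero_pow (Fact.out : p.Prime).ne_zero]
  | single_add g b f hgf hb ih =>
      classical
      have hsupp : (MonoidAlgebra.single g b + f).coeff.support = {g} ∪ f.coeff.support := by
        rw [MonoidAlgebra.coeff_add, MonoidAlgebra.coeff_single,
          Finsupp.support_add_eq, Finsupp.support_single_ne_zero g hb]
        rw [Finsupp.support_single_ne_zero g hb]
        simpa using hgf
      have hg : g ∈ Subgroup.center G := h g (by rw [hsupp]; simp)
      have hf : ∀ g' ∈ f.coeff.support, g' ∈ Subgroup.center G := fun g' hg' =>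
        h g' (by rw [hsupp]; simp [hg'])
      have hcom := s16_commute_single_of_center (p := p) hg b f
      rw [add_pow_char_of_commute p hcom, ih hf, MonoidAlgebra.mapDomain_add,
        MonoidAlgebra.mapDomain_single]
      congr 1
      show MonoidAlgebra.single g b ^ p
        = (MonoidAlgebra.single (g ^ p) b : MonoidAlgebra (ZMod p) G)
      rw [MonoidAlgebra.single_pow, ZMod.pow_card]

section Ic
variable {c : G} (hcZ : c ∈ Subgroup.center G)

include hcZ in
lemma s16_d_comm (b : MonoidAlgebra (ZMod p) G) :
    Commute (MonoidAlgebra.of (ZMod p) G c - 1) b :=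
  (s16_commute_single_of_center hcZ 1 b).sub_left (Commute.one_left b)

include hcZ in
lemma s16_Ic_mul_mem {w : MonoidAlgebra (ZMod p) G} (hw : w ∈ s16Ic p c)
    (s : MonoidAlgebra (ZMod p) G) : w * s ∈ s16Ic p c := by
  obtain ⟨r, rfl⟩ := Submodule.mem_span_singleton.mp hw
  rw [smul_eq_mul, mul_assoc, (s16_d_comm hcZ s).eq, ← mul_assoc]
  exact Ideal.mul_mem_left _ _ (Ideal.subset_span rfl)

lemma s16_of_pow_sub_one_mem (k : ℕ) :
    MonoidAlgebra.of (ZMod p) G c ^ k - 1 ∈ s16Ic p c := by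
  induction k with
  | zero => simp
  | succ k ih =>
      have : MonoidAlgebra.of (ZMod p) G c ^ (k+1) - 1
          = MonoidAlgebra.of (ZMod p) G c ^ k * (MonoidAlgebra.of (ZMod p) G c - 1)
            + (MonoidAlgebra.of (ZMod p) G c ^ k - 1) := by noncomm_ring
      rw [this]
      exact Ideal.add_mem _ (Ideal.mul_mem_left _ _ (Ideal.subset_span rfl)) ih

lemma s16_of_zpowers_sub_one_mem (hfin : IsOfFinOrder c) {z : G}
    (hz : z ∈ Subgroup.zpowers c) :
    MonoidAlgebra.of (ZMod p) G z - 1 ∈ s16Ic p c := by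
  obtain ⟨k, rfl⟩ := hfin.mem_powers_iff_mem_zpowers.mpr hz
  rw [map_pow]
  exact s16_of_pow_sub_one_mem k

include hcZ in
lemma s16_comm_sub_mem (hfin : IsOfFinOrder c)
    (hGc : ∀ g h : G, (⁅g, h⁆ : G) ∈ Subgroup.zpowers c)
    (a b : MonoidAlgebra (ZMod p) G) : a * b - b * a ∈ s16Ic p c := by
  induction a using MonoidAlgebra.induction_on with
  | of g =>
      induction b using MonoidAlgebra.induction_on with
      | of h =>
          have key : MonoidAlgebra.of (ZMod p) G g * MonoidAlgebra.of (ZMod p) G h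
              - MonoidAlgebra.of (ZMod p) G h * MonoidAlgebra.of (ZMod p) G g
              = (MonoidAlgebra.of (ZMod p) G ⁅g, h⁆ - 1)
                * (MonoidAlgebra.of (ZMod p) G h * MonoidAlgebra.of (ZMod p) G g) := by
            rw [sub_mul, one_mul, ← map_mul, ← map_mul, ← map_mul]
            congr 2
            group
          rw [key]
          exact s16_Ic_mul_mem hcZ (s16_of_zpowers_sub_one_mem hfin (hGc g h)) _
      | add f1 f2 h1 h2 =>
          have : MonoidAlgebra.of (ZMod p) G g * (f1 + f2)
              - (f1 + f2) * MonoidAlgebra.of (ZMod p) G g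
              = (MonoidAlgebra.of (ZMod p) G g * f1 - f1 * MonoidAlgebra.of (ZMod p) G g)
              + (MonoidAlgebra.of (ZMod p) G g * f2 - f2 * MonoidAlgebra.of (ZMod p) G g) := by
            noncomm_ring
          rw [this]; exact Ideal.add_mem _ h1 h2
      | smul r f hf =>
          have : MonoidAlgebra.of (ZMod p) G g * (r • f)
              - (r • f) * MonoidAlgebra.of (ZMod p) G g
              = r • (MonoidAlgebra.of (ZMod p) G g * f - f * MonoidAlgebra.of (ZMod p) G g) := by
            rw [smul_sub, mul_smul_comm, smul_mul_assoc]
          rw [this]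
          exact Submodule.smul_of_tower_mem _ r hf
  | add f1 f2 h1 h2 =>
      have : (f1 + f2) * b - b * (f1 + f2)
          = (f1 * b - b * f1) + (f2 * b - b * f2) := by noncomm_ring
      rw [this]; exact Ideal.add_mem _ h1 h2
  | smul r f hf =>
      have : (r • f) * b - b * (r • f) = r • (f * b - b * f) := by
        rw [smul_sub, smul_mul_assoc, mul_smul_comm]
      rw [this]
      exact Submodule.smul_of_tower_mem _ r hf

lemma s16_one_not_mem_Ic : (1 : MonoidAlgebra (ZMod p) G) ∉ s16Ic p c := by
  intro h1
  have hle : s16Ic p c ≤ RingHom.ker (aug p G).toRingHom := by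
    rw [s16Ic, Ideal.span_le]
    rintro x rfl
    simp [RingHom.mem_ker, aug]
  have := hle h1
  rw [RingHom.mem_ker] at this
  simp at this

variable (p c) in
/-- The ring congruence associated to the ideal `s16Ic`. -/
def s16Rc (hcZ : c ∈ Subgroup.center G) : RingCon (MonoidAlgebra (ZMod p) G) where
  r x y := x - y ∈ s16Ic p c
  iseqv := by
    constructor
    · intro x; simp
    · intro x y h; simpa using (s16Ic p c).neg_mem h
    · intro x y z h1 h2; simpa using (s16Ic p c).add_mem h1 h2
  add' := by
    intro a b d e h1 h2
    show a + d - (b + e) ∈ s16Ic p c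
    have h1' : a - b ∈ s16Ic p c := h1
    have h2' : d - e ∈ s16Ic p c := h2
    have : a + d - (b + e) = (a - b) + (d - e) := by noncomm_ring
    rw [this]; exact (s16Ic p c).add_mem h1' h2'
  mul' := by
    intro a b d e h1 h2
    show a * d - b * e ∈ s16Ic p c
    have h1' : a - b ∈ s16Ic p c := h1
    have h2' : d - e ∈ s16Ic p c := h2
    have : a * d - b * e = a * (d - e) + (a - b) * e := by noncomm_ring
    rw [this]
    exact (s16Ic p c).add_mem (Ideal.mul_mem_left _ _ h2') (s16_Ic_mul_mem hcZ h1' e)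

lemma s16_rcIc_rel {x y : MonoidAlgebra (ZMod p) G} :
    s16Rc p c hcZ x y ↔ x - y ∈ s16Ic p c := Iff.rfl

lemma s16_nontrivialQ : Nontrivial (s16Rc p c hcZ).Quotient := by
  refine ⟨⟨((1 : MonoidAlgebra (ZMod p) G) : (s16Rc p c hcZ).Quotient),
    ((0 : MonoidAlgebra (ZMod p) G) : (s16Rc p c hcZ).Quotient), fun h => ?_⟩⟩
  exact s16_one_not_mem_Ic
    (by simpa [s16_rcIc_rel] using (RingCon.eq (c := s16Rc p c hcZ)).mp h)

lemma s16_charQ : CharP (s16Rc p c hcZ).Quotient p := by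
  haveI := s16_nontrivialQ (p := p) hcZ
  have f := (RingCon.mk' (s16Rc p c hcZ)).comp
    (algebraMap (ZMod p) (MonoidAlgebra (ZMod p) G))
  exact charP_of_injective_ringHom f.injective p

lemma s16_commQ (hfin : IsOfFinOrder c)
    (hGc : ∀ g h : G, (⁅g, h⁆ : G) ∈ Subgroup.zpowers c)
    (x y : (s16Rc p c hcZ).Quotient) : Commute x y := by
  refine Quotient.inductionOn₂' x y fun a b => ?_
  show ((a * b : MonoidAlgebra (ZMod p) G) : (s16Rc p c hcZ).Quotient)
    = ((b * a : MonoidAlgebra (ZMod p) G) : (s16Rc p c hcZ).Quotient)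
  exact ((s16Rc p c hcZ).eq).mpr (s16_comm_sub_mem hcZ hfin hGc a b)

include hcZ in
lemma s16_pow_p_sub_mem (hfin : IsOfFinOrder c)
    (hGc : ∀ g h : G, (⁅g, h⁆ : G) ∈ Subgroup.zpowers c)
    (α : MonoidAlgebra (ZMod p) G) :
    α ^ p - s16PowMap p α ∈ s16Ic p c := by
  haveI := s16_charQ (p := p) hcZ
  set π := RingCon.mk' (s16Rc p c hcZ) with hπ
  have key : ∀ β : MonoidAlgebra (ZMod p) G,
      π (β ^ p) = π (s16PowMap p β) := by
    intro β
    induction β using MonoidAlgebra.induction with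
    | zero =>
        rw [show s16PowMap p (0 : MonoidAlgebra (ZMod p) G) = 0 from
          MonoidAlgebra.mapDomain_zero (f := (· ^ p))]
        rw [zero_pow (Fact.out : p.Prime).ne_zero]
    | single_add g b f hgf hb ih =>
        have hmd : s16PowMap p (MonoidAlgebra.single g b + f)
            = (MonoidAlgebra.single (g ^ p) b : MonoidAlgebra (ZMod p) G)
              + s16PowMap p f := by
          show MonoidAlgebra.mapDomain _ _ = _
          rw [MonoidAlgebra.mapDomain_add, MonoidAlgebra.mapDomain_single]; rfl
        rw [map_pow, map_add, add_pow_char_of_commute p (s16_commQ hcZ hfin hGc _ _),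
          ← map_pow, ← map_pow, ih, hmd, map_add]
        congr 2
        show MonoidAlgebra.single g b ^ p
          = (MonoidAlgebra.single (g ^ p) b : MonoidAlgebra (ZMod p) G)
        rw [MonoidAlgebra.single_pow, ZMod.pow_card]
  have h2 := key α
  exact ((s16Rc p c hcZ).eq).mp h2
end Ic

lemma s16_powMap_support_center {k : ℕ} (hk : ∀ g : G, g ^ k ∈ Subgroup.center G)
    (α : MonoidAlgebra (ZMod p) G) :
    ∀ g ∈ (s16PowMap k α).coeff.support, g ∈ Subgroup.center G := by
  classical
  intro g hg
  have := Finsupp.mapDomain_support (s := α.coeff) hg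
  obtain ⟨g', _, rfl⟩ := Finset.mem_image.mp this
  exact hk g'

lemma s16_powMap_pow_p {k : ℕ} (hk : ∀ g : G, g ^ k ∈ Subgroup.center G)
    (α : MonoidAlgebra (ZMod p) G) :
    (s16PowMap k α) ^ p = s16PowMap (k * p) α := by
  haveI := s16CharR (p := p) (G := G)
  rw [s16_pow_p_of_support_center _ (s16_powMap_support_center hk α)]
  show MonoidAlgebra.mapDomain _ (MonoidAlgebra.mapDomain _ _) = _
  rw [s16_mapDom_comp]
  show MonoidAlgebra.mapDomain (fun g => (g ^ k) ^ p) α = MonoidAlgebra.mapDomain (· ^ (k * p)) α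
  simp only [← pow_mul]

section main
variable {c : G} (hcZ : c ∈ Subgroup.center G) (hfin : IsOfFinOrder c)
  (hcp1 : c ^ p = 1) (hGc : ∀ g h : G, (⁅g, h⁆ : G) ∈ Subgroup.zpowers c)
  (hp1 : ∀ g : G, g ^ p ∈ Subgroup.center G)

include hcZ hfin hcp1 hGc hp1 in
lemma s16_pow_p_sq (α : MonoidAlgebra (ZMod p) G) :
    α ^ (p ^ 2) = s16PowMap (p ^ 2) α := by
  haveI := s16CharR (p := p) (G := G)
  have hw := s16_pow_p_sub_mem hcZ hfin hGc α
  set β := s16PowMap p α with hβ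
  set w := α ^ p - β with hww
  have hαp : α ^ p = β + w := by rw [hww]; noncomm_ring
  have hsupp := s16_powMap_support_center (p := p) hp1 α
  have hcomm : Commute β w := s16_commute_of_support_center hsupp w
  have hwp : w ^ p = 0 := by
    obtain ⟨r, hr⟩ := Submodule.mem_span_singleton.mp hw
    have hrd : Commute r (MonoidAlgebra.of (ZMod p) G c - 1) := (s16_d_comm hcZ r).symm
    rw [← hr, smul_eq_mul, hrd.mul_pow]
    have : (MonoidAlgebra.of (ZMod p) G c - 1) ^ p = 0 := by
      rw [sub_pow_char_of_commute p (Commute.one_right _), one_pow, ← map_pow, hcp1,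
        map_one, sub_self]
    rw [this, mul_zero]
  have h1 : α ^ (p ^ 2) = (α ^ p) ^ p := by rw [← pow_mul, pow_two]
  rw [h1, hαp, add_pow_char_of_commute p hcomm, hwp, add_zero, hβ,
    s16_powMap_pow_p hp1, ← pow_two]

include hcZ hfin hcp1 hGc hp1 in
lemma s16_pow_p_l (l : ℕ) (hl : 2 ≤ l) (α : MonoidAlgebra (ZMod p) G) :
    α ^ (p ^ l) = s16PowMap (p ^ l) α := by
  induction l, hl using Nat.le_induction with
  | base => exact s16_pow_p_sq hcZ hfin hcp1 hGc hp1 α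
  | succ l hl ih =>
      have hkc : ∀ g : G, g ^ (p ^ l) ∈ Subgroup.center G := by
        intro g
        obtain ⟨l', rfl⟩ : ∃ l', l = l' + 1 := ⟨l - 1, by omega⟩
        rw [pow_succ, pow_mul]
        exact hp1 _
      rw [pow_succ, pow_mul, ih, s16_powMap_pow_p hkc]
end main

lemma s16_aux1 {x y z : G} (hz : ∀ w : G, Commute z w) (hyx : y * x = z * (x * y)) :
    ∀ k : ℕ, y ^ k * x = z ^ k * (x * y ^ k)
  | 0 => by simp
  | k + 1 => by
    calc y ^ (k+1) * x = y * (y ^ k * x) := by rw [pow_succ', mul_assoc]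
    _ = y * (z ^ k * (x * y ^ k)) := by rw [s16_aux1 hz hyx k]
    _ = z ^ k * (y * (x * y ^ k)) := by
        rw [← mul_assoc, ← ((hz y).pow_left k).eq, mul_assoc]
    _ = z ^ k * ((y * x) * y ^ k) := by rw [← mul_assoc y x]
    _ = z ^ k * ((z * (x * y)) * y ^ k) := by rw [hyx]
    _ = z ^ (k+1) * (x * y ^ (k+1)) := by group

lemma s16_aux2 {x y z : G} (hz : ∀ w : G, Commute z w) (hyx : y * x = z * (x * y)) :
    ∀ k : ℕ, (x * y) ^ k = x ^ k * y ^ k * z ^ (k.choose 2)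
  | 0 => by simp
  | k + 1 => by
    have hC : (k+1).choose 2 = k + k.choose 2 := by
      rw [Nat.choose_succ_succ, Nat.choose_one_right]
    calc (x*y) ^ (k+1) = (x*y) ^ k * (x*y) := pow_succ _ _
    _ = x ^ k * y ^ k * z ^ (k.choose 2) * (x * y) := by rw [s16_aux2 hz hyx k]
    _ = x ^ k * y ^ k * (x * y) * z ^ (k.choose 2) := by
        rw [mul_assoc _ _ (x*y), ((hz (x*y)).pow_left (k.choose 2)).eq, ← mul_assoc]
    _ = x ^ k * ((y ^ k * x) * y) * z ^ (k.choose 2) := by group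
    _ = x ^ k * ((z ^ k * (x * y ^ k)) * y) * z ^ (k.choose 2) := by rw [s16_aux1 hz hyx k]
    _ = (x ^ k * z ^ k) * (x * (y ^ k * y)) * z ^ (k.choose 2) := by group
    _ = z ^ k * (x ^ (k+1) * y ^ (k+1)) * z ^ (k.choose 2) := by
        rw [← ((hz (x^k)).pow_left k).eq]; group
    _ = x ^ (k+1) * y ^ (k+1) * z ^ ((k+1).choose 2) := by
        rw [hC, pow_add z, ((hz (x ^ (k+1) * y ^ (k+1))).pow_left k).eq]; group

lemma s16_z_pow_p_eq_one {c z : G} (hcp1 : c ^ p = 1) (hz : z ∈ Subgroup.zpowers c) :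
    z ^ p = 1 := by
  obtain ⟨k, rfl⟩ := hz
  rw [← zpow_natCast, ← zpow_mul, mul_comm, zpow_mul, zpow_natCast, hcp1, one_zpow]

lemma s16_p_dvd_choose (hp : Odd p) {l : ℕ} (hl : 1 ≤ l) :
    p ∣ (p ^ l).choose 2 := by
  obtain ⟨t, ht⟩ := hp.pow (n := l)
  have h2 : p ^ l - 1 = 2 * t := by omega
  rw [Nat.choose_two_right, h2, Nat.mul_div_assoc _ ⟨t, rfl⟩, Nat.mul_div_cancel_left _ (by norm_num)]
  exact Dvd.dvd.mul_right (dvd_pow_self p (by omega)) t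

lemma s16_pow_mul_pow (hp : Odd p)
    (hZc : ∀ x y : G, (⁅x, y⁆ : G) ∈ Subgroup.center G)
    (hzp : ∀ x y : G, (⁅x, y⁆ : G) ^ p = 1)
    {l : ℕ} (hl : 1 ≤ l) (x y : G) :
    (x * y) ^ (p ^ l) = x ^ (p ^ l) * y ^ (p ^ l) := by
  set z := (⁅y, x⁆ : G) with hzdef
  have hz : ∀ w : G, Commute z w := fun w =>
    (Subgroup.mem_center_iff.mp (hZc y x) w).symm
  have hyx : y * x = z * (x * y) := by rw [hzdef]; group
  rw [s16_aux2 hz hyx (p ^ l)]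
  obtain ⟨t, ht⟩ := s16_p_dvd_choose hp hl
  rw [ht, pow_mul, hzp y x, one_pow, mul_one]

end Stmt16Aux


/-- for `l ≥ 2`, `V(𝔽_pG)^{p^l} = V(𝔽_p G^{p^l})`; in particular
`α^{p^l} = Σ α_g g^{p^l}` for every normalized unit `α = Σ α_g g`. -/
theorem stmt_16 {p n m : ℕ} [Fact p.Prime] (hp : Odd p) (hm : 1 ≤ m) (hmn : m ≤ n)
    {G : Type*} [Group G] [Fintype G] (hpG : IsPGroup p G)
    (N : Subgroup G) (hNZ : N ≤ Subgroup.center G)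
    (hNiso : Nonempty (↥N ≃* Multiplicative (ZMod (p ^ n)) × Multiplicative (ZMod (p ^ m))))
    (hpow : ∀ x : G, x ^ p ∈ N) (hcomm : ∀ x y : G, ⁅x, y⁆ ∈ N)
    (c : G) (hc : commutator G = Subgroup.zpowers c) (hcp : orderOf c = p) :
    ∀ l : ℕ, 2 ≤ l →
      powSub (normUnits p G) (p ^ l) = normUnitsOf p (pthPowers G (p ^ l)) ∧
      ∀ u ∈ normUnits p G,
        (u : MonoidAlgebra (ZMod p) G) ^ p ^ l =
          Finsupp.sum (u : MonoidAlgebra (ZMod p) G).coeff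
            (fun g a => MonoidAlgebra.single (g ^ p ^ l) a) := by
  intro l hl
  classical
  have hfp : Fact p.Prime := inferInstance
  have hcommle : commutator G ≤ N := by
    rw [commutator_def]
    rw [Subgroup.commutator_le]
    intro g1 _ g2 _
    exact hcomm g1 g2
  have hcZ : c ∈ Subgroup.center G := hNZ (hcommle (hc ▸ Subgroup.mem_zpowers c))
  have hGc : ∀ g h : G, (⁅g, h⁆ : G) ∈ Subgroup.zpowers c := fun g h =>
    hc ▸ Subgroup.commutator_mem_commutator (Subgroup.mem_top g) (Subgroup.mem_top h)
  have hcp1 : c ^ p = 1 := by rw [← hcp]; exact pow_orderOf_eq_one c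
  have hfin : IsOfFinOrder c := isOfFinOrder_of_finite c
  have hzp : ∀ x y : G, (⁅x, y⁆ : G) ^ p = 1 := fun x y =>
    s16_z_pow_p_eq_one hcp1 (hGc x y)
  have hZc : ∀ x y : G, (⁅x, y⁆ : G) ∈ Subgroup.center G := fun x y => hNZ (hcomm x y)
  have hp1 : ∀ g : G, g ^ p ∈ Subgroup.center G := fun g => hNZ (hpow g)
  have hq1 : 1 ≤ p ^ l := Nat.one_le_pow _ _ (Fact.out : p.Prime).pos
  have hφmul : ∀ x y : G, (x * y) ^ (p ^ l) = x ^ (p ^ l) * y ^ (p ^ l) :=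
    s16_pow_mul_pow hp hZc hzp (by omega)
  set φ : G →* G := MonoidHom.mk' (· ^ (p ^ l)) hφmul with hφ
  have hmain : ∀ α : MonoidAlgebra (ZMod p) G, α ^ (p ^ l) = s16PowMap (p ^ l) α :=
    fun α => s16_pow_p_l hcZ hfin hcp1 hGc hp1 l hl α
  constructor
  · -- the subgroup equality
    have hrange : pthPowers G (p ^ l) = φ.range := by
      rw [pthPowers]
      have hset : {x : G | ∃ g : G, x = g ^ (p ^ l)} = (φ.range : Set G) := by
        ext x
        constructor
        · rintro ⟨g, rfl⟩; exact ⟨g, rfl⟩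
        · rintro ⟨g, rfl⟩; exact ⟨g, rfl⟩
      rw [hset, Subgroup.closure_eq]
    rw [hrange]
    apply le_antisymm
    · -- powSub ≤ normUnitsOf
      rw [powSub]
      rw [Subgroup.closure_le]
      rintro x ⟨v, hv, rfl⟩
      refine Subgroup.mem_map.mpr
        ⟨Units.map (MonoidAlgebra.mapDomainRingHom (ZMod p) φ.rangeRestrict).toMonoidHom v,
          ?_, ?_⟩
      · rw [s16_mem_normUnits]
        have : ((Units.map (MonoidAlgebra.mapDomainRingHom (ZMod p)
            φ.rangeRestrict).toMonoidHom v : (MonoidAlgebra (ZMod p) ↥φ.range)ˣ) :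
            MonoidAlgebra (ZMod p) ↥φ.range)
            = s16MapDom φ.rangeRestrict (v : MonoidAlgebra (ZMod p) G) := rfl
        rw [this, s16_aug_mapDom]
        exact s16_mem_normUnits.mp hv
      · apply Units.ext
        show MonoidAlgebra.mapDomainRingHom (ZMod p) φ.range.subtype
            (MonoidAlgebra.mapDomainRingHom (ZMod p) φ.rangeRestrict
              (v : MonoidAlgebra (ZMod p) G))
          = ((v ^ (p ^ l) : (MonoidAlgebra (ZMod p) G)ˣ) : MonoidAlgebra (ZMod p) G)
        rw [Units.val_pow_eq_pow_val, hmain]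
        show MonoidAlgebra.mapDomain _ (MonoidAlgebra.mapDomain _ _) = _
        rw [s16_mapDom_comp]
        rfl
    · -- normUnitsOf ≤ powSub
      rintro u hu
      obtain ⟨w, hw, rfl⟩ := Subgroup.mem_map.mp hu
      apply Subgroup.subset_closure
      have hsec : ∀ h : ↥φ.range, ∃ g : G, φ g = (h : G) := fun h => h.2
      choose s hs using hsec
      set α : MonoidAlgebra (ZMod p) G :=
        s16MapDom s (w : MonoidAlgebra (ZMod p) ↥φ.range) with hα
      set U : (MonoidAlgebra (ZMod p) G)ˣ :=
        Units.map (MonoidAlgebra.mapDomainRingHom (ZMod p) φ.range.subtype).toMonoidHom w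
        with hU
      have hαq : α ^ (p ^ l) = (U : MonoidAlgebra (ZMod p) G) := by
        rw [hmain]
        show MonoidAlgebra.mapDomain _ (MonoidAlgebra.mapDomain _ _)
          = MonoidAlgebra.mapDomainRingHom (ZMod p) φ.range.subtype
              (w : MonoidAlgebra (ZMod p) ↥φ.range)
        rw [s16_mapDom_comp, MonoidAlgebra.mapDomainRingHom_apply]
        apply congrArg MonoidAlgebra.ofCoeff
        apply Finsupp.mapDomain_congr
        intro h _
        show (s h) ^ (p ^ l) = _
        exact hs h
      have hCαU : Commute α (U : MonoidAlgebra (ZMod p) G) := by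
        rw [← hαq]
        exact (Commute.refl α).pow_right _
      have hCαUi : Commute α ((U⁻¹ : (MonoidAlgebra (ZMod p) G)ˣ) :
          MonoidAlgebra (ZMod p) G) := hCαU.units_inv_right
      refine ⟨⟨α, α ^ (p ^ l - 1) * ((U⁻¹ : (MonoidAlgebra (ZMod p) G)ˣ) :
          MonoidAlgebra (ZMod p) G), ?_, ?_⟩, ?_, ?_⟩
      · show α * _ = 1
        rw [← mul_assoc, ← pow_succ', Nat.sub_add_cancel hq1, hαq, Units.mul_inv]
      · show _ * α = 1
        rw [mul_assoc, ← hCαUi.eq, ← mul_assoc, ← pow_succ, Nat.sub_add_cancel hq1,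
          hαq, Units.mul_inv]
      · rw [s16_mem_normUnits]
        show aug p G α = 1
        rw [hα, s16_aug_mapDom]
        exact s16_mem_normUnits.mp hw
      · apply Units.ext
        rw [Units.val_pow_eq_pow_val]
        exact hαq.symm
  · -- the power formula for units
    intro u _
    rw [hmain]
    apply MonoidAlgebra.coeff_injective
    rw [MonoidAlgebra.coeff_finsuppSum]
    rfl


end
end
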